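/- arXiv:1207.2212 — 6 statements merged into one kernel-verified Lean document; each statement's English description precedes it below -/
import Mathlib

section
/- Let f be differentiable on I° with f' integrable on [a,b], a < b, α,λ ∈ [0,1], q > 1 with 1/p+1/q = 1, and |f'|^q h-concave on [a,b] with h(1/2) > 0. Set E = (1-α)|f'(((1-α)b+(1+α)a)/2)|^q, F = α|f'(((2-α)b+αa)/2)|^q, ε₁ = (αλ)^{p+1}+(1-α-αλ)^{p+1}, ε₃ = (λ(1-α))^{p+1}+(α-λ(1-α))^{p+1}. If αλ ≤ 1-α ≤ 1-λ(1-α), then |λ(αf(a)+(1-α)f(b)) + (1-λ)f(αa+(1-α)b) - (1/(b-a))∫ₐᵇ f(x)dx| ≤ (b-a)(1/(2h(1/2)))^{1/q}(1/(p+1))^{1/p}[ε₁^{1/p} E^{1/q} + ε₃^{1/p} F^{1/q}]. -/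
open MeasureTheory

lemma aux_holder (g : ℝ → ℝ) (x y c C : ℝ) {p q : ℝ} (hxy : x ≤ y)
    (hcx : x ≤ c) (hcy : c ≤ y)
    (hpq : Real.HolderConjugate p q)
    (hgm : AEStronglyMeasurable g (volume.restrict (Set.Ioc x y)))
    (hrefl : ∀ t ∈ Set.Icc x y, |g t| ^ q + |g (x + y - t)| ^ q ≤ C) :
    |∫ t in x..y, (t - c) * g t| ≤
      (((c - x) ^ (p+1) + (y - c) ^ (p+1)) / (p + 1)) ^ (1/p) *
      ((y - x) * C / 2) ^ (1/q) := by
  have hp1 : 1 < p := hpq.lt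
  have hp0 : 0 < p := lt_trans one_pos hp1
  have hq1 : 1 < q := hpq.symm.lt
  have hq0 : 0 < q := lt_trans one_pos hq1
  have hC0 : 0 ≤ C := by
    have := hrefl x ⟨le_refl x, hxy⟩
    have h1 : (0:ℝ) ≤ |g x| ^ q := Real.rpow_nonneg (abs_nonneg _) _
    have h2 : (0:ℝ) ≤ |g (x + y - x)| ^ q := Real.rpow_nonneg (abs_nonneg _) _
    linarith
  have hgq : ∀ t ∈ Set.Icc x y, |g t| ^ q ≤ C := by
    intro t ht
    have := hrefl t ht
    have h2 : (0:ℝ) ≤ |g (x + y - t)| ^ q := Real.rpow_nonneg (abs_nonneg _) _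
    linarith
  have hgbd : ∀ t ∈ Set.Icc x y, |g t| ≤ C ^ (1/q) := by
    intro t ht
    have h := Real.rpow_le_rpow (Real.rpow_nonneg (abs_nonneg _) _) (hgq t ht)
      (by positivity : (0:ℝ) ≤ 1/q)
    rwa [← Real.rpow_mul (abs_nonneg _), mul_one_div, div_self (ne_of_gt hq0),
      Real.rpow_one] at h
  set μ := volume.restrict (Set.Ioc x y) with hμ
  haveI : IsFiniteMeasure μ := by
    constructor
    rw [hμ, Measure.restrict_apply_univ, Real.volume_Ioc]
    exact ENNReal.ofReal_lt_top
  -- continuity of |t - c| ^ p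
  have hcont : Continuous fun t : ℝ => |t - c| ^ p :=
    ((continuous_abs.comp (continuous_id.sub continuous_const))).rpow_const
      (fun t => Or.inr hp0.le)
  have hcont1 : Continuous fun t : ℝ => |t - c| :=
    continuous_abs.comp (continuous_id.sub continuous_const)
  -- Memℒp facts
  have hmem1 : MemLp (fun t => |t - c|) (ENNReal.ofReal p) μ := by
    refine MemLp.of_bound hcont1.aestronglyMeasurable (y - x) ?_
    filter_upwards [ae_restrict_mem measurableSet_Ioc] with t ht
    rw [Real.norm_eq_abs, abs_abs, abs_sub_le_iff]
    constructor <;> linarith [ht.1, ht.2]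
  have hmem2 : MemLp (fun t => |g t|) (ENNReal.ofReal q) μ := by
    refine MemLp.of_bound ?_ (C ^ (1/q)) ?_
    · exact continuous_abs.comp_aestronglyMeasurable hgm
    · filter_upwards [ae_restrict_mem measurableSet_Ioc] with t ht
      rw [Real.norm_eq_abs, abs_abs]
      exact hgbd t ⟨ht.1.le, ht.2⟩
  have holder := integral_mul_le_Lp_mul_Lq_of_nonneg hpq
    (Filter.Eventually.of_forall fun t => abs_nonneg _)
    (Filter.Eventually.of_forall fun t => abs_nonneg _) hmem1 hmem2
  -- |J| ≤ ∫ |t-c| * |g t|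
  have step1 : |∫ t in x..y, (t - c) * g t| ≤ ∫ t, |t - c| * |g t| ∂μ := by
    calc |∫ t in x..y, (t - c) * g t| ≤ ∫ t in x..y, |(t - c) * g t| :=
          intervalIntegral.abs_integral_le_integral_abs hxy
      _ = ∫ t in x..y, |t - c| * |g t| := by
          apply intervalIntegral.integral_congr
          intro t _; exact abs_mul _ _
      _ = ∫ t, |t - c| * |g t| ∂μ := intervalIntegral.integral_of_le hxy
  -- compute factor A
  have hAcomp : ∫ t, |t - c| ^ p ∂μ = ((c - x) ^ (p+1) + (y - c) ^ (p+1)) / (p + 1) := by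
    rw [← intervalIntegral.integral_of_le hxy]
    have hsplit : (∫ t in x..c, |t - c| ^ p) + (∫ t in c..y, |t - c| ^ p)
        = ∫ t in x..y, |t - c| ^ p :=
      intervalIntegral.integral_add_adjacent_intervals
        (hcont.intervalIntegrable _ _) (hcont.intervalIntegrable _ _)
    rw [← hsplit]
    have h1 : (∫ t in x..c, |t - c| ^ p) = (c - x) ^ (p+1) / (p+1) := by
      have e1 : (∫ t in x..c, |t - c| ^ p) = ∫ t in x..c, (c - t) ^ p := by
        apply intervalIntegral.integral_congr
        intro t ht
        rw [Set.uIcc_of_le hcx] at ht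
        show |t - c| ^ p = (c - t) ^ p
        rw [abs_sub_comm, abs_of_nonneg (by linarith [ht.2] : (0:ℝ) ≤ c - t)]
      rw [e1, intervalIntegral.integral_comp_sub_left (fun u => u ^ p) c, sub_self,
        integral_rpow (Or.inl (by linarith)),
        Real.zero_rpow (by positivity), sub_zero]
    have h2 : (∫ t in c..y, |t - c| ^ p) = (y - c) ^ (p+1) / (p+1) := by
      have e2 : (∫ t in c..y, |t - c| ^ p) = ∫ t in c..y, (t - c) ^ p := by
        apply intervalIntegral.integral_congr
        intro t ht
        rw [Set.uIcc_of_le hcy] at ht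
        show |t - c| ^ p = (t - c) ^ p
        rw [abs_of_nonneg (by linarith [ht.1] : (0:ℝ) ≤ t - c)]
      rw [e2, intervalIntegral.integral_comp_sub_right (fun u => u ^ p) c, sub_self,
        integral_rpow (Or.inl (by linarith)),
        Real.zero_rpow (by positivity), sub_zero]
    rw [h1, h2]; ring
  -- factor B bound
  have hGm : AEStronglyMeasurable (fun t => |g t| ^ q) μ :=
    (continuous_abs.rpow_const (fun _ => Or.inr hq0.le)).comp_aestronglyMeasurable hgm
  have hGint : IntervalIntegrable (fun t => |g t| ^ q) volume x y := by
    rw [intervalIntegrable_iff_integrableOn_Ioc_of_le hxy]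
    rw [IntegrableOn, ← memLp_one_iff_integrable]
    refine MemLp.of_bound hGm C ?_
    filter_upwards [ae_restrict_mem measurableSet_Ioc] with t ht
    rw [Real.norm_eq_abs, abs_of_nonneg (Real.rpow_nonneg (abs_nonneg _) _)]
    exact hgq t ⟨ht.1.le, ht.2⟩
  have hGint' : IntervalIntegrable (fun t => |g (x + y - t)| ^ q) volume x y := by
    have := hGint.comp_sub_left (x + y)
    have e1 : x + y - x = y := by ring
    have e2 : x + y - y = x := by ring
    rw [e1, e2] at this
    exact this.symm
  have hBle : ∫ t, |g t| ^ q ∂μ ≤ (y - x) * C / 2 := by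
    have hrefl' : (∫ t in x..y, (|g t| ^ q + |g (x + y - t)| ^ q))
        ≤ ∫ t in x..y, C := by
      apply intervalIntegral.integral_mono_on hxy (hGint.add hGint')
        (intervalIntegrable_const)
      intro t ht
      exact hrefl t ht
    rw [intervalIntegral.integral_add hGint hGint',
      intervalIntegral.integral_const, smul_eq_mul] at hrefl'
    have hreflid : (∫ t in x..y, |g (x + y - t)| ^ q) = ∫ t in x..y, |g t| ^ q := by
      rw [intervalIntegral.integral_comp_sub_left (fun u => |g u| ^ q) (x + y)]
      congr 1 <;> ring
    rw [hreflid] at hrefl'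
    rw [← intervalIntegral.integral_of_le hxy]
    linarith
  -- combine
  have hBnn : 0 ≤ ∫ t, |g t| ^ q ∂μ :=
    integral_nonneg fun t => Real.rpow_nonneg (abs_nonneg _) _
  calc |∫ t in x..y, (t - c) * g t| ≤ ∫ t, |t - c| * |g t| ∂μ := step1
    _ ≤ (∫ t, |t - c| ^ p ∂μ) ^ (1/p) * (∫ t, |g t| ^ q ∂μ) ^ (1/q) := holder
    _ ≤ (((c - x) ^ (p+1) + (y - c) ^ (p+1)) / (p + 1)) ^ (1/p) *
        ((y - x) * C / 2) ^ (1/q) := by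
      rw [hAcomp]
      apply mul_le_mul_of_nonneg_left _ (Real.rpow_nonneg _ _)
      · exact Real.rpow_le_rpow hBnn hBle (by positivity)
      · apply div_nonneg _ (by linarith)
        have := Real.rpow_nonneg (by linarith : (0:ℝ) ≤ c - x) (p+1)
        have := Real.rpow_nonneg (by linarith : (0:ℝ) ≤ y - c) (p+1)
        linarith
set_option maxHeartbeats 1000000 in
theorem stmt_11 (I : Set ℝ) (h f f' : ℝ → ℝ) (a b α l p q E F ε₁ ε₃ : ℝ)
    (hab : a < b) (hI : Set.Icc a b ⊆ interior I)
    (hα : α ∈ Set.Icc (0:ℝ) 1) (hl : l ∈ Set.Icc (0:ℝ) 1)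
    (hq : 1 < q) (hpq : 1/p + 1/q = 1)
    (hder : ∀ x ∈ interior I, HasDerivAt f (f' x) x)
    (hint : IntervalIntegrable f' volume a b)
    (hh0 : ∀ t ∈ Set.Ioo (0:ℝ) 1, 0 ≤ h t)
    (hhint : IntervalIntegrable h volume 0 1)
    (hhalf : 0 < h (1/2))
    (hconc : ∀ x ∈ Set.Icc a b, ∀ y ∈ Set.Icc a b, ∀ t ∈ Set.Ioo (0:ℝ) 1,
      h t * |f' x| ^ q + h (1 - t) * |f' y| ^ q ≤ |f' (t * x + (1 - t) * y)| ^ q)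
    (hE : E = (1 - α) * |f' (((1 - α) * b + (1 + α) * a) / 2)| ^ q)
    (hF : F = α * |f' (((2 - α) * b + α * a) / 2)| ^ q)
    (hε₁ : ε₁ = (α * l) ^ (p+1) + (1 - α - α * l) ^ (p+1))
    (hε₃ : ε₃ = (l * (1 - α)) ^ (p+1) + (α - l * (1 - α)) ^ (p+1))
    (hcase₁ : α * l ≤ 1 - α) (hcase₂ : 1 - α ≤ 1 - l * (1 - α)) :
    |l * (α * f a + (1 - α) * f b) + (1 - l) * f (α * a + (1 - α) * b)
        - (1 / (b - a)) * ∫ x in a..b, f x|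
      ≤ (b - a) * (1 / (2 * h (1/2))) ^ (1/q) * (1/(p+1)) ^ (1/p) *
        (ε₁ ^ (1/p) * E ^ (1/q) + ε₃ ^ (1/p) * F ^ (1/q)) := by
  have hba : (0:ℝ) < b - a := sub_pos.mpr hab
  have hba' : b - a ≠ 0 := ne_of_gt hba
  have hq0 : 0 < q := lt_trans one_pos hq
  have hqinv1 : 1/q < 1 := by rw [div_lt_one hq0]; exact hq
  have hpinv : 0 < 1/p := by linarith
  have hp0 : 0 < p := one_div_pos.mp hpinv
  have hp1 : 1 < p := by
    have : 1/p < 1 := by linarith [one_div_pos.mpr hq0]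
    exact (div_lt_one hp0).mp this
  have hpq' : Real.HolderConjugate p q := Real.holderConjugate_iff.mpr ⟨hp1, by simpa [one_div] using hpq⟩
  have hα0 := hα.1
  have hα1 := hα.2
  have hl0 := hl.1
  have hl1 := hl.2
  have hd0 : (0:ℝ) ≤ 1 - α := by linarith
  have hd1 : (1:ℝ) - α ≤ 1 := by linarith
  have hc10 : (0:ℝ) ≤ α * l := mul_nonneg hα0 hl0
  have hc20 : 1 - α ≤ 1 - l * (1 - α) := hcase₂
  have hc21 : 1 - l * (1 - α) ≤ 1 := by nlinarith
  set g : ℝ → ℝ := fun t => f' ((b - a) * t + a) with hg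
  have hφmem : ∀ t : ℝ, 0 ≤ t → t ≤ 1 → (b - a) * t + a ∈ Set.Icc a b := by
    intro t h0 h1
    constructor <;> nlinarith
  have hgint : IntervalIntegrable g volume 0 1 := by
    have h1 := hint.comp_add_right a
    rw [sub_self] at h1
    have h2 := h1.comp_mul_left (c := b - a)
    rw [zero_div, div_self hba'] at h2
    exact h2
  have hgm : ∀ x y : ℝ, 0 ≤ x → y ≤ 1 →
      AEStronglyMeasurable g (volume.restrict (Set.Ioc x y)) := by
    intro x y hx hy
    have hmeas : Measurable fun t : ℝ => deriv f ((b - a) * t + a) :=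
      (measurable_deriv f).comp ((measurable_id.const_mul (b - a)).add_const a)
    refine hmeas.aestronglyMeasurable.congr ?_
    rw [Filter.EventuallyEq, ae_restrict_iff' measurableSet_Ioc]
    apply ae_of_all
    intro t ht
    have hmem := hφmem t (le_trans hx ht.1.le) (le_trans ht.2 hy)
    exact (hder _ (hI hmem)).deriv
  have hderφ : ∀ t : ℝ, 0 ≤ t → t ≤ 1 →
      HasDerivAt (fun s => f ((b - a) * s + a)) (g t * (b - a)) t := by
    intro t h0 h1
    have hφd : HasDerivAt (fun s : ℝ => (b - a) * s + a) (b - a) t := by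
      simpa using ((hasDerivAt_id t).const_mul (b - a)).add_const a
    have := (hder _ (hI (hφmem t h0 h1))).comp t hφd
    simpa [hg, mul_comm, Function.comp_def] using this
  have hcontfφ : ContinuousOn (fun t : ℝ => f ((b - a) * t + a)) (Set.Icc 0 1) := by
    intro t ht
    exact ((hderφ t ht.1 ht.2).continuousAt).continuousWithinAt
  have hfφint : ∀ x y : ℝ, 0 ≤ x → x ≤ y → y ≤ 1 →
      IntervalIntegrable (fun t => f ((b - a) * t + a)) volume x y := by
    intro x y h0 hxy h1
    apply ContinuousOn.intervalIntegrable
    apply hcontfφ.mono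
    rw [Set.uIcc_of_le hxy]
    exact Set.Icc_subset_Icc h0 h1
  have hkey : ∀ x y c : ℝ, 0 ≤ x → x ≤ y → y ≤ 1 →
      (b - a) * (∫ t in x..y, (t - c) * g t)
        = (y - c) * f ((b - a) * y + a) - (x - c) * f ((b - a) * x + a)
          - ∫ t in x..y, f ((b - a) * t + a) := by
    intro x y c h0 hxy h1
    have hIBP := intervalIntegral.integral_mul_deriv_eq_deriv_mul
      (u := fun t => t - c) (u' := fun _ => (1:ℝ))
      (v := fun t => f ((b - a) * t + a)) (v' := fun t => g t * (b - a))
      (fun t _ => by simpa using (hasDerivAt_id t).sub_const c)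
      (fun t ht => by
        rw [Set.uIcc_of_le hxy] at ht
        exact hderφ t (le_trans h0 ht.1) (le_trans ht.2 h1))
      intervalIntegrable_const
      ((hgint.mono_set (by
          rw [Set.uIcc_of_le hxy, Set.uIcc_of_le (zero_le_one)]
          exact Set.Icc_subset_Icc h0 h1)).mul_const _)
    simp only [one_mul] at hIBP
    calc (b - a) * (∫ t in x..y, (t - c) * g t)
        = ∫ t in x..y, (b - a) * ((t - c) * g t) := by
          rw [intervalIntegral.integral_const_mul]
      _ = ∫ t in x..y, (t - c) * (g t * (b - a)) := by
          apply intervalIntegral.integral_congr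
          intro t _; ring
      _ = _ := by rw [hIBP]
  have k1 := hkey 0 (1 - α) (α * l) le_rfl hd0 hd1
  have k2 := hkey (1 - α) 1 (1 - l * (1 - α)) hd0 hd1 le_rfl
  rw [show (b - a) * 0 + a = a by ring] at k1
  rw [show (b - a) * 1 + a = b by ring] at k2
  rw [show (b - a) * (1 - α) + a = α * a + (1 - α) * b by ring] at k1 k2
  have hsplit : (∫ t in (0:ℝ)..(1 - α), f ((b - a) * t + a))
      + (∫ t in (1 - α)..(1:ℝ), f ((b - a) * t + a))
      = (b - a)⁻¹ * ∫ x in a..b, f x := by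
    rw [intervalIntegral.integral_add_adjacent_intervals
      (hfφint 0 (1 - α) le_rfl hd0 hd1) (hfφint (1 - α) 1 hd0 hd1 le_rfl)]
    rw [intervalIntegral.integral_comp_mul_add f hba' a]
    rw [show (b - a) * 0 + a = a by ring, show (b - a) * 1 + a = b by ring, smul_eq_mul]
  have hX : l * (α * f a + (1 - α) * f b) + (1 - l) * f (α * a + (1 - α) * b)
        - (1 / (b - a)) * ∫ x in a..b, f x
      = (b - a) * (∫ t in (0:ℝ)..(1 - α), (t - α * l) * g t)
        + (b - a) * (∫ t in (1 - α)..(1:ℝ), (t - (1 - l * (1 - α))) * g t) := by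
    linear_combination (-1) * k1 + (-1) * k2 + hsplit
  -- reflection bounds
  have hrefl₁ : ∀ t ∈ Set.Icc (0:ℝ) (1 - α),
      |g t| ^ q + |g (0 + (1 - α) - t)| ^ q
        ≤ |f' (((1 - α) * b + (1 + α) * a) / 2)| ^ q / h (1/2) := by
    intro t ht
    have hm1 := hφmem t ht.1 (le_trans ht.2 hd1)
    have hm2 := hφmem (0 + (1 - α) - t) (by simp; linarith [ht.2]) (by linarith [ht.1])
    have hcc := hconc ((b - a) * t + a) hm1 ((b - a) * (0 + (1 - α) - t) + a) hm2
      (1/2) (by norm_num)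
    rw [show (1:ℝ) - 1/2 = 1/2 by norm_num] at hcc
    rw [show (1:ℝ)/2 * ((b - a) * t + a) + 1/2 * ((b - a) * (0 + (1 - α) - t) + a)
        = ((1 - α) * b + (1 + α) * a) / 2 by ring] at hcc
    rw [le_div_iff₀ hhalf]
    simp only [hg]
    ring_nf
    ring_nf at hcc
    linarith
  have hrefl₂ : ∀ t ∈ Set.Icc (1 - α) (1:ℝ),
      |g t| ^ q + |g ((1 - α) + 1 - t)| ^ q
        ≤ |f' (((2 - α) * b + α * a) / 2)| ^ q / h (1/2) := by
    intro t ht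
    have hm1 := hφmem t (le_trans hd0 ht.1) ht.2
    have hm2 := hφmem ((1 - α) + 1 - t) (by linarith [ht.2]) (by linarith [ht.1])
    have hcc := hconc ((b - a) * t + a) hm1 ((b - a) * ((1 - α) + 1 - t) + a) hm2
      (1/2) (by norm_num)
    rw [show (1:ℝ) - 1/2 = 1/2 by norm_num] at hcc
    rw [show (1:ℝ)/2 * ((b - a) * t + a) + 1/2 * ((b - a) * ((1 - α) + 1 - t) + a)
        = ((2 - α) * b + α * a) / 2 by ring] at hcc
    rw [le_div_iff₀ hhalf]
    simp only [hg]
    ring_nf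
    ring_nf at hcc
    linarith
  have hε₁nn : 0 ≤ ε₁ := by
    rw [hε₁]
    have h1 := Real.rpow_nonneg hc10 (p+1)
    have h2 := Real.rpow_nonneg (by linarith : (0:ℝ) ≤ 1 - α - α * l) (p+1)
    linarith
  have hε₃nn : 0 ≤ ε₃ := by
    rw [hε₃]
    have h1 := Real.rpow_nonneg (mul_nonneg hl0 hd0) (p+1)
    have h2 := Real.rpow_nonneg (by linarith : (0:ℝ) ≤ α - l * (1 - α)) (p+1)
    linarith
  have hEnn : 0 ≤ E := by
    rw [hE]; exact mul_nonneg hd0 (Real.rpow_nonneg (abs_nonneg _) _)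
  have hFnn : 0 ≤ F := by
    rw [hF]; exact mul_nonneg hα0 (Real.rpow_nonneg (abs_nonneg _) _)
  have hinvh : (0:ℝ) ≤ 1 / (2 * h (1/2)) := by positivity
  have H1 : |∫ t in (0:ℝ)..(1 - α), (t - α * l) * g t|
      ≤ ε₁ ^ (1/p) * (1/(p+1)) ^ (1/p) * (E ^ (1/q) * (1 / (2 * h (1/2))) ^ (1/q)) := by
    refine le_trans (aux_holder g 0 (1 - α) (α * l)
      (|f' (((1 - α) * b + (1 + α) * a) / 2)| ^ q / h (1/2)) hd0 hc10 hcase₁ hpq'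
      (hgm 0 (1 - α) le_rfl hd1) hrefl₁) (le_of_eq ?_)
    rw [show (α * l - 0 : ℝ) = α * l by ring]
    rw [show ((1 - α : ℝ) - 0) * (|f' (((1 - α) * b + (1 + α) * a) / 2)| ^ q / h (1/2)) / 2
        = E * (1 / (2 * h (1/2))) by rw [hE]; ring]
    rw [← hε₁]
    rw [show ε₁ / (p+1) = ε₁ * (1/(p+1)) by ring]
    rw [Real.mul_rpow hε₁nn (by positivity), Real.mul_rpow hEnn hinvh]
  have H2 : |∫ t in (1 - α)..(1:ℝ), (t - (1 - l * (1 - α))) * g t|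
      ≤ ε₃ ^ (1/p) * (1/(p+1)) ^ (1/p) * (F ^ (1/q) * (1 / (2 * h (1/2))) ^ (1/q)) := by
    refine le_trans (aux_holder g (1 - α) 1 (1 - l * (1 - α))
      (|f' (((2 - α) * b + α * a) / 2)| ^ q / h (1/2)) hd1 hc20 hc21 hpq'
      (hgm (1 - α) 1 hd0 le_rfl) hrefl₂) (le_of_eq ?_)
    rw [show ((1 - l * (1 - α)) - (1 - α) : ℝ) = α - l * (1 - α) by ring]
    rw [show ((1:ℝ) - (1 - l * (1 - α))) = l * (1 - α) by ring]
    rw [show ((1:ℝ) - (1 - α)) * (|f' (((2 - α) * b + α * a) / 2)| ^ q / h (1/2)) / 2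
        = F * (1 / (2 * h (1/2))) by rw [hF]; ring]
    rw [show (α - l * (1 - α)) ^ (p+1) + (l * (1 - α)) ^ (p+1) = ε₃ by rw [hε₃]; ring]
    rw [show ε₃ / (p+1) = ε₃ * (1/(p+1)) by ring]
    rw [Real.mul_rpow hε₃nn (by positivity), Real.mul_rpow hFnn hinvh]
  rw [hX]
  calc |(b - a) * (∫ t in (0:ℝ)..(1 - α), (t - α * l) * g t)
        + (b - a) * (∫ t in (1 - α)..(1:ℝ), (t - (1 - l * (1 - α))) * g t)|
      ≤ (b - a) * |∫ t in (0:ℝ)..(1 - α), (t - α * l) * g t|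
        + (b - a) * |∫ t in (1 - α)..(1:ℝ), (t - (1 - l * (1 - α))) * g t| := by
        refine le_trans (abs_add_le _ _) ?_
        rw [abs_mul, abs_mul, abs_of_pos hba]
    _ ≤ (b - a) * (ε₁ ^ (1/p) * (1/(p+1)) ^ (1/p) * (E ^ (1/q) * (1 / (2 * h (1/2))) ^ (1/q)))
        + (b - a) * (ε₃ ^ (1/p) * (1/(p+1)) ^ (1/p) * (F ^ (1/q) * (1 / (2 * h (1/2))) ^ (1/q))) := by
        exact add_le_add (mul_le_mul_of_nonneg_left H1 hba.le)
          (mul_le_mul_of_nonneg_left H2 hba.le)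
    _ = (b - a) * (1 / (2 * h (1/2))) ^ (1/q) * (1/(p+1)) ^ (1/p) *
        (ε₁ ^ (1/p) * E ^ (1/q) + ε₃ ^ (1/p) * F ^ (1/q)) := by ring
end

section
/- If |f'|^q is h-concave on [a,b] with h(1/2) > 0 and α ∈ [0,1], then ∫₀^{1-α} |f'(tb+(1-t)a)|^q dt ≤ ((1-α)/(2h(1/2))) |f'(((1-α)b+(1+α)a)/2)|^q. -/
open MeasureTheory

theorem stmt_12 (h f' : ℝ → ℝ) (a b α q : ℝ)
    (hab : a < b) (hα : α ∈ Set.Icc (0:ℝ) 1)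
    (hh0 : ∀ t ∈ Set.Ioo (0:ℝ) 1, 0 ≤ h t) (hhalf : 0 < h (1/2))
    (hgint : IntervalIntegrable (fun x => |f' x| ^ q) volume a b)
    (hconc : ∀ x ∈ Set.Icc a b, ∀ y ∈ Set.Icc a b, ∀ t ∈ Set.Ioo (0:ℝ) 1,
      h t * |f' x| ^ q + h (1 - t) * |f' y| ^ q ≤ |f' (t * x + (1 - t) * y)| ^ q) :
    (∫ t in (0:ℝ)..(1 - α), |f' (t * b + (1 - t) * a)| ^ q)
      ≤ ((1 - α) / (2 * h (1/2))) * |f' (((1 - α) * b + (1 + α) * a) / 2)| ^ q := by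
  obtain ⟨hα0, hα1⟩ := hα
  set c : ℝ := 1 - α with hc
  have hc0 : 0 ≤ c := by simp [hc]; linarith
  have hc1 : c ≤ 1 := by simp [hc]; linarith
  set φ : ℝ → ℝ := fun t => |f' (t * b + (1 - t) * a)| ^ q with hφ
  set M : ℝ := |f' ((c * b + (1 + α) * a) / 2)| ^ q with hM
  have hba : (0:ℝ) < b - a := by linarith
  -- integrability of φ on [0, 1], hence on [0, c]
  have h1 : IntervalIntegrable (fun x => |f' (x + a)| ^ q) volume 0 (b - a) := by
    simpa using hgint.comp_add_right a
  have h2 : IntervalIntegrable (fun t => |f' (t * (b - a) + a)| ^ q) volume 0 1 := by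
    have := h1.comp_mul_right (c := b - a)
    simpa [hba.ne', div_self hba.ne'] using this
  have hφint1 : IntervalIntegrable φ volume 0 1 := by
    apply h2.congr
    intro t _
    simp only [hφ]
    ring_nf
  have hφint : IntervalIntegrable φ volume 0 c := by
    apply hφint1.mono_set
    rw [Set.uIcc_of_le hc0, Set.uIcc_of_le (by norm_num : (0:ℝ) ≤ 1)]
    exact Set.Icc_subset_Icc le_rfl hc1
  have hφint2 : IntervalIntegrable (fun t => φ (c - t)) volume 0 c := by
    exact (hφint.comp_sub_left c).symm.mono_set (by simp)
  -- reflection identity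
  have hrefl : (∫ t in (0:ℝ)..c, φ (c - t)) = ∫ t in (0:ℝ)..c, φ t := by
    simpa using intervalIntegral.integral_comp_sub_left φ c
  -- membership lemma
  have hmem : ∀ t : ℝ, 0 ≤ t → t ≤ 1 → t * b + (1 - t) * a ∈ Set.Icc a b := by
    intro t ht0 ht1
    constructor <;> nlinarith
  -- the key pointwise inequality
  have hkey : ∀ t ∈ Set.Icc (0:ℝ) c,
      h (1/2) * φ t + h (1/2) * φ (c - t) ≤ M := by
    intro t ⟨ht0, htc⟩
    have hx := hmem t ht0 (htc.trans hc1)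
    have hy := hmem (c - t) (by linarith) (by linarith)
    have := hconc _ hx _ hy (1/2) (by norm_num)
    have heq : (1:ℝ)/2 * (t * b + (1 - t) * a) + (1 - 1/2) * ((c - t) * b + (1 - (c - t)) * a)
        = (c * b + (1 + α) * a) / 2 := by
      simp only [hc]; ring
    rw [heq] at this
    have h12 : (1:ℝ) - 1/2 = 1/2 := by norm_num
    rw [h12] at this
    simpa [hφ, hM] using this
  -- integrate the inequality
  have hmono : (∫ t in (0:ℝ)..c, (h (1/2) * φ t + h (1/2) * φ (c - t)))
      ≤ ∫ t in (0:ℝ)..c, M := by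
    apply intervalIntegral.integral_mono_on hc0
    · exact (hφint.const_mul _).add (hφint2.const_mul _)
    · exact intervalIntegrable_const
    · exact hkey
  rw [intervalIntegral.integral_const, smul_eq_mul, sub_zero] at hmono
  rw [intervalIntegral.integral_add (hφint.const_mul _) (hφint2.const_mul _),
    intervalIntegral.integral_const_mul, intervalIntegral.integral_const_mul, hrefl] at hmono
  have : (∫ t in (0:ℝ)..c, φ t) ≤ c / (2 * h (1/2)) * M := by
    rw [div_mul_eq_mul_div, le_div_iff₀ (by linarith)]
    linarith
  simpa [hφ, hM, hc] using this
end

section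
/- Let f be differentiable on I° with f' integrable on [a,b], a < b, q > 1 with 1/p+1/q = 1, and |f'|^q s-concave on [a,b] for s ∈ (0,1]. Then |(f(a)+f(b))/2 - (1/(b-a))∫ₐᵇ f(x)dx| ≤ ((b-a)/4)(1/(p+1))^{1/p}(1/2)^{(1-s)/q}[|f'((3b+a)/4)| + |f'((3a+b)/4)|]. -/
open MeasureTheory

lemma cont_rpow_const {q : ℝ} (hq : 0 < q) : Continuous fun y : ℝ => y ^ q :=
  continuous_iff_continuousAt.2 fun x => Real.continuousAt_rpow_const x q (Or.inr hq.le)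

lemma half_bound {p q : ℝ} (hpq : Real.HolderConjugate p q) {φ : ℝ → ℝ} {α β C : ℝ}
    (hαβ : α < β) (hφ : IntervalIntegrable φ volume α β)
    (hbd : ∀ x ∈ Set.Icc α β, |φ x| ≤ C)
    (hmid : ∀ x ∈ Set.Icc α β, |φ x| ^ q + |φ (α + β - x)| ^ q ≤ 2 * |φ ((α + β)/2)| ^ q) :
    ∫ x in α..β, (x - α) * |φ x| ≤ (β - α)^2 * (1/(p+1)) ^ (1/p) * |φ ((α + β)/2)| := by
  have hp1 := hpq.lt
  have hp0 := hpq.pos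
  have hq0 := hpq.symm.pos
  have hβα : (0:ℝ) < β - α := by linarith
  set μ := volume.restrict (Set.Ioc α β) with hμ
  haveI : IsFiniteMeasure μ := ⟨by
    rw [hμ, Measure.restrict_apply_univ, Real.volume_Ioc]
    exact ENNReal.ofReal_lt_top⟩
  have hmφ : AEStronglyMeasurable φ μ := hφ.1.aestronglyMeasurable
  have hmabs : AEStronglyMeasurable (fun x => |φ x|) μ := by
    simpa [Real.norm_eq_abs] using hmφ.norm
  have hC0 : 0 ≤ C := le_trans (abs_nonneg _) (hbd α ⟨le_refl _, hαβ.le⟩)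
  -- Memℒp facts
  have hw : MemLp (fun x : ℝ => x - α) (ENNReal.ofReal p) μ := by
    refine MemLp.of_bound ((continuous_id.sub continuous_const).aestronglyMeasurable) (β - α) ?_
    rw [hμ]
    refine (ae_restrict_iff' measurableSet_Ioc).2 (Filter.Eventually.of_forall fun x hx => ?_)
    rw [Real.norm_eq_abs, abs_of_nonneg (by linarith [hx.1] : (0:ℝ) ≤ x - α)]
    linarith [hx.2]
  have hgg : MemLp (fun x => |φ x|) (ENNReal.ofReal q) μ := by
    refine MemLp.of_bound hmabs C ?_
    rw [hμ]
    refine (ae_restrict_iff' measurableSet_Ioc).2 (Filter.Eventually.of_forall fun x hx => ?_)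
    rw [Real.norm_eq_abs, abs_abs]
    exact hbd x ⟨hx.1.le, hx.2⟩
  have hwnn : 0 ≤ᵐ[μ] fun x : ℝ => x - α := by
    rw [hμ]
    exact (ae_restrict_iff' measurableSet_Ioc).2 (Filter.Eventually.of_forall fun x hx => by
      simpa using (by linarith [hx.1] : (0:ℝ) ≤ x - α))
  have habsnn : 0 ≤ᵐ[μ] fun x => |φ x| := Filter.Eventually.of_forall fun x => abs_nonneg _
  have holder := integral_mul_le_Lp_mul_Lq_of_nonneg hpq hwnn habsnn hw hgg
  -- rewrite measure integrals as interval integrals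
  have e₁ : ∫ a, (a - α) * |φ a| ∂μ = ∫ x in α..β, (x - α) * |φ x| := by
    rw [intervalIntegral.integral_of_le hαβ.le]
  have e₂ : ∫ a, (a - α) ^ p ∂μ = ∫ x in α..β, (x - α) ^ p := by
    rw [intervalIntegral.integral_of_le hαβ.le]
  have e₃ : ∫ a, |φ a| ^ q ∂μ = ∫ x in α..β, |φ x| ^ q := by
    rw [intervalIntegral.integral_of_le hαβ.le]
  rw [e₁, e₂, e₃] at holder
  -- compute the weight integral
  have hA : ∫ x in α..β, (x - α) ^ p = (β - α) ^ (p+1) / (p+1) := by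
    have h1 : ∫ x in α..β, (x - α) ^ p = ∫ x in (α - α)..(β - α), x ^ p :=
      intervalIntegral.integral_comp_sub_right (fun x => x ^ p) α
    rw [h1, sub_self, integral_rpow (Or.inl (by linarith : (-1:ℝ) < p)),
      Real.zero_rpow (by linarith : p + 1 ≠ 0), sub_zero]
  -- integrability of |φ|^q
  have hmgq : AEStronglyMeasurable (fun x => |φ x| ^ q) μ :=
    (cont_rpow_const hq0).comp_aestronglyMeasurable hmabs
  have hgint : IntervalIntegrable (fun x => |φ x| ^ q) volume α β := by
    constructor
    · refine Integrable.mono' (integrable_const (C ^ q)) hmgq ?_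
      refine (ae_restrict_iff' measurableSet_Ioc).2 (Filter.Eventually.of_forall fun x hx => ?_)
      rw [Real.norm_eq_abs, abs_of_nonneg (Real.rpow_nonneg (abs_nonneg _) _)]
      exact Real.rpow_le_rpow (abs_nonneg _) (hbd x ⟨hx.1.le, hx.2⟩) hq0.le
    · rw [Set.Ioc_eq_empty (by linarith : ¬ β < α)]
      exact integrableOn_empty
  have hrefl : IntervalIntegrable (fun x => |φ (α + β - x)| ^ q) volume α β := by
    have := (hgint.comp_sub_left (α + β)).symm
    simpa using this
  -- Jensen via reflection
  have hB : ∫ x in α..β, |φ x| ^ q ≤ (β - α) * |φ ((α + β)/2)| ^ q := by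
    have h1 : ∫ x in α..β, |φ (α + β - x)| ^ q = ∫ x in α..β, |φ x| ^ q := by
      have := intervalIntegral.integral_comp_sub_left (a := α) (b := β) (fun x => |φ x| ^ q) (α + β)
      simpa using this
    have h2 := intervalIntegral.integral_mono_on hαβ.le (hgint.add hrefl)
      (intervalIntegrable_const (c := 2 * |φ ((α + β)/2)| ^ q)) hmid
    rw [intervalIntegral.integral_add hgint hrefl, h1, intervalIntegral.integral_const,
      smul_eq_mul] at h2
    linarith
  -- combine
  have hBnn : 0 ≤ ∫ x in α..β, |φ x| ^ q := by
    rw [intervalIntegral.integral_of_le hαβ.le]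
    exact setIntegral_nonneg measurableSet_Ioc fun x _ => Real.rpow_nonneg (abs_nonneg _) _
  have hAnn : (0:ℝ) ≤ ((β - α) ^ (p+1) / (p+1)) ^ (1/p) :=
    Real.rpow_nonneg (by positivity) _
  have step2 : (∫ x in α..β, |φ x| ^ q) ^ (1/q) ≤ ((β - α) * |φ ((α + β)/2)| ^ q) ^ (1/q) :=
    Real.rpow_le_rpow hBnn hB (by positivity)
  have final : ((β - α) ^ (p+1) / (p+1)) ^ (1/p) * ((β - α) * |φ ((α + β)/2)| ^ q) ^ (1/q)
      = (β - α)^2 * (1/(p+1)) ^ (1/p) * |φ ((α + β)/2)| := by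
    rw [div_eq_mul_one_div, Real.mul_rpow (Real.rpow_nonneg hβα.le _) (by positivity),
      Real.mul_rpow hβα.le (Real.rpow_nonneg (abs_nonneg _) _),
      ← Real.rpow_mul hβα.le, ← Real.rpow_mul (abs_nonneg _), mul_one_div_cancel
        (ne_of_gt hq0), Real.rpow_one]
    have hexp : (β - α) ^ ((p+1) * (1/p)) * (β - α) ^ (1/q) = (β - α) ^ (2:ℝ) := by
      rw [← Real.rpow_add hβα]
      congr 1
      have this1 : p⁻¹ + q⁻¹ = 1 := hpq.inv_add_inv_eq_one
      have hqp : q + p = p * q := by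
        field_simp at this1
        linarith
      field_simp
      linear_combination hqp
    calc (β - α) ^ ((p+1) * (1/p)) * (1/(p+1)) ^ (1/p) * ((β - α) ^ (1/q) * |φ ((α + β)/2)|)
        = ((β - α) ^ ((p+1) * (1/p)) * (β - α) ^ (1/q)) * (1/(p+1)) ^ (1/p) * |φ ((α + β)/2)| := by
          ring
      _ = (β - α) ^ (2:ℝ) * (1/(p+1)) ^ (1/p) * |φ ((α + β)/2)| := by rw [hexp]
      _ = (β - α)^2 * (1/(p+1)) ^ (1/p) * |φ ((α + β)/2)| := by
          rw [show (2:ℝ) = ((2:ℕ):ℝ) by norm_num, Real.rpow_natCast]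
  calc ∫ x in α..β, (x - α) * |φ x|
      ≤ (∫ x in α..β, (x - α) ^ p) ^ (1/p) * (∫ x in α..β, |φ x| ^ q) ^ (1/q) := holder
    _ ≤ ((β - α) ^ (p+1) / (p+1)) ^ (1/p) * ((β - α) * |φ ((α + β)/2)| ^ q) ^ (1/q) := by
        rw [hA]
        exact mul_le_mul_of_nonneg_left step2 hAnn
    _ = (β - α)^2 * (1/(p+1)) ^ (1/p) * |φ ((α + β)/2)| := final

theorem stmt_13 (I : Set ℝ) (f f' : ℝ → ℝ) (a b s p q : ℝ)
    (hab : a < b) (hI0 : I ⊆ Set.Ici (0:ℝ)) (hI : Set.Icc a b ⊆ interior I)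
    (hs : s ∈ Set.Ioc (0:ℝ) 1) (hq : 1 < q) (hpq : 1/p + 1/q = 1)
    (hder : ∀ x ∈ interior I, HasDerivAt f (f' x) x)
    (hint : IntervalIntegrable f' volume a b)
    (hconc : ∀ x ∈ Set.Icc a b, ∀ y ∈ Set.Icc a b, ∀ t ∈ Set.Icc (0:ℝ) 1,
      t ^ s * |f' x| ^ q + (1 - t) ^ s * |f' y| ^ q ≤ |f' (t * x + (1 - t) * y)| ^ q) :
    |(f a + f b)/2 - (1 / (b - a)) * ∫ x in a..b, f x|
      ≤ ((b - a)/4) * (1/(p+1)) ^ (1/p) * ((1:ℝ)/2) ^ ((1-s)/q) *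
        (|f' ((3*b + a)/4)| + |f' ((3*a + b)/4)|) := by
  obtain ⟨hs0, hs1⟩ := hs
  have hq0 : (0:ℝ) < q := lt_trans one_pos hq
  have h1q : (0:ℝ) < 1/q := by positivity
  have h1q1 : 1/q < 1 := (div_lt_one hq0).mpr hq
  have h1p : (0:ℝ) < 1/p := by linarith
  have hp0 : 0 < p := one_div_pos.mp h1p
  have hp1 : 1 < p := (div_lt_one hp0).mp (by linarith)
  have hpq' : Real.HolderConjugate p q := Real.holderConjugate_iff.mpr ⟨hp1, by rw [inv_eq_one_div, inv_eq_one_div]; exact hpq⟩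
  have hK0 : (0:ℝ) ≤ (1/(p+1)) ^ (1/p) := Real.rpow_nonneg (by positivity) _
  have hcont : ContinuousOn f (Set.Icc a b) := fun x hx =>
    ((hder x (hI hx)).continuousAt).continuousWithinAt
  rcases lt_or_eq_of_le hs1 with hslt | hseq
  · -- case s < 1 : f' vanishes on [a,b]
    have hz : ∀ x ∈ Set.Icc a b, f' x = 0 := by
      intro x hx
      have h := hconc x hx x hx (1/2) (by norm_num)
      rw [show (1:ℝ) - 1/2 = 1/2 by norm_num, show (1/2:ℝ) * x + (1/2) * x = x by ring] at h
      have hhalf : (1/2:ℝ) < ((1:ℝ)/2) ^ s := by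
        calc ((1:ℝ)/2) ^ s > ((1:ℝ)/2) ^ (1:ℝ) :=
              Real.rpow_lt_rpow_of_exponent_gt (by norm_num) (by norm_num) hslt
          _ = 1/2 := Real.rpow_one _
      have hgx : (0:ℝ) ≤ |f' x| ^ q := Real.rpow_nonneg (abs_nonneg _) _
      have hzero : |f' x| ^ q = 0 := by nlinarith
      have := (Real.rpow_eq_zero (abs_nonneg _) (ne_of_gt hq0)).mp hzero
      exact abs_eq_zero.mp this
    have hconst : ∀ x ∈ Set.Icc a b, f x = f a := by
      intro x hx
      rcases eq_or_lt_of_le hx.1 with h | h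
      · rw [← h]
      · obtain ⟨ξ, hξ, hslope⟩ := exists_hasDerivAt_eq_slope f f' h
          (hcont.mono (Set.Icc_subset_Icc le_rfl hx.2))
          (fun y hy => hder y (hI ⟨hy.1.le, hy.2.le.trans hx.2⟩))
        have h0 := hz ξ ⟨hξ.1.le, hξ.2.le.trans hx.2⟩
        rw [h0] at hslope
        have hxa : x - a ≠ 0 := by linarith
        field_simp at hslope
        linarith
    have hfb : f b = f a := hconst b ⟨hab.le, le_refl _⟩
    have hfint : ∫ x in a..b, f x = (b - a) * f a := by
      rw [intervalIntegral.integral_congr (g := fun _ => f a)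
        (fun x hx => hconst x (by rwa [Set.uIcc_of_le hab.le] at hx)),
        intervalIntegral.integral_const, smul_eq_mul]
    rw [hfb, hfint]
    have hba : b - a ≠ 0 := by linarith
    rw [show (f a + f a)/2 - (1/(b-a)) * ((b-a) * f a) = 0 by field_simp; ring, abs_zero]
    apply mul_nonneg (mul_nonneg (mul_nonneg (by linarith) hK0)
      (Real.rpow_nonneg (by norm_num) _)) (by positivity)
  · -- case s = 1
    subst hseq
    rw [show ((1:ℝ)-1)/q = 0 by ring, Real.rpow_zero, mul_one]
    set c := (a+b)/2 with hc
    have hac : a < c := by rw [hc]; linarith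
    have hcb : c < b := by rw [hc]; linarith
    -- midpoint concavity
    have hmid2 : ∀ x ∈ Set.Icc a b, ∀ y ∈ Set.Icc a b,
        |f' x| ^ q + |f' y| ^ q ≤ 2 * |f' ((x+y)/2)| ^ q := by
      intro x hx y hy
      have h := hconc x hx y hy (1/2) (by norm_num)
      rw [show (1:ℝ) - 1/2 = 1/2 by norm_num, Real.rpow_one,
        show (1/2:ℝ) * x + (1/2) * y = (x+y)/2 by ring] at h
      linarith
    set C := (2 * |f' c| ^ q) ^ (1/q) with hC
    have hbd : ∀ x ∈ Set.Icc a b, |f' x| ≤ C := by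
      intro x hx
      have hy : a + b - x ∈ Set.Icc a b := ⟨by linarith [hx.2], by linarith [hx.1]⟩
      have h := hmid2 x hx (a+b-x) hy
      rw [show (x + (a+b-x))/2 = c by rw [hc]; ring] at h
      have h1 : |f' x| ^ q ≤ 2 * |f' c| ^ q := by
        have := Real.rpow_nonneg (abs_nonneg (f' (a+b-x))) q
        linarith
      calc |f' x| = (|f' x| ^ q) ^ (1/q) := by
            rw [← Real.rpow_mul (abs_nonneg _), mul_one_div_cancel (ne_of_gt hq0),
              Real.rpow_one]
        _ ≤ C := Real.rpow_le_rpow (Real.rpow_nonneg (abs_nonneg _) _) h1 h1q.le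
    -- integration by parts identity
    have hfi : IntervalIntegrable f volume a b := by
      apply ContinuousOn.intervalIntegrable
      rwa [Set.uIcc_of_le hab.le]
    have parts : ∫ x in a..b, (x - c) * f' x
        = (b - c) * f b - (a - c) * f a - ∫ x in a..b, f x := by
      have h := intervalIntegral.integral_mul_deriv_eq_deriv_mul
        (u := fun x => x - c) (v := f) (u' := fun _ => (1:ℝ)) (v' := f')
        (fun x _ => (hasDerivAt_id x).sub_const c)
        (fun x hx => hder x (hI (by rwa [Set.uIcc_of_le hab.le] at hx)))
        intervalIntegrable_const hint
      simpa using h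
    -- split the integral
    have hprod : IntervalIntegrable (fun x => (x - c) * f' x) volume a b := by
      apply hint.continuousOn_mul
      exact (continuous_id.sub continuous_const).continuousOn
    have hpl : IntervalIntegrable (fun x => (x - c) * f' x) volume a c :=
      hprod.mono_set (by
        rw [Set.uIcc_of_le hac.le, Set.uIcc_of_le hab.le]
        exact Set.Icc_subset_Icc le_rfl hcb.le)
    have hpr : IntervalIntegrable (fun x => (x - c) * f' x) volume c b :=
      hprod.mono_set (by
        rw [Set.uIcc_of_le hcb.le, Set.uIcc_of_le hab.le]
        exact Set.Icc_subset_Icc hac.le le_rfl)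
    have hsplit : (∫ x in a..c, (x - c) * f' x) + (∫ x in c..b, (x - c) * f' x)
        = ∫ x in a..b, (x - c) * f' x :=
      intervalIntegral.integral_add_adjacent_intervals hpl hpr
    -- left half
    set φ : ℝ → ℝ := fun y => f' (a + c - y) with hφdef
    have hφint : IntervalIntegrable φ volume a c := by
      have h1 : IntervalIntegrable f' volume a c :=
        hint.mono_set (by
          rw [Set.uIcc_of_le hac.le, Set.uIcc_of_le hab.le]
          exact Set.Icc_subset_Icc le_rfl hcb.le)
      have := h1.comp_sub_left (a + c)
      simpa [hφdef] using this.symm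
    have hsubst : ∀ x, x ∈ Set.Icc a c → a + c - x ∈ Set.Icc a b := by
      intro x hx
      exact ⟨by linarith [hx.2], by linarith [hx.1, hcb.le]⟩
    have hφbd : ∀ x ∈ Set.Icc a c, |φ x| ≤ C := fun x hx => hbd _ (hsubst x hx)
    have hφmid : ∀ x ∈ Set.Icc a c,
        |φ x| ^ q + |φ (a + c - x)| ^ q ≤ 2 * |φ ((a + c)/2)| ^ q := by
      intro x hx
      have hx' : x ∈ Set.Icc a b := ⟨hx.1, hx.2.trans hcb.le⟩
      have h := hmid2 (a + c - x) (hsubst x hx) x hx'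
      rw [show ((a + c - x) + x)/2 = (a+c)/2 by ring] at h
      have e1 : φ x = f' (a + c - x) := rfl
      have e2 : φ (a + c - x) = f' x := by rw [hφdef]; norm_num
      have e3 : φ ((a+c)/2) = f' ((a+c)/2) := by
        show f' (a + c - (a+c)/2) = f' ((a+c)/2)
        congr 1; ring
      rw [e1, e2, e3]
      linarith
    have hleft0 := half_bound hpq' hac hφint hφbd hφmid
    have hrefl_eq : ∫ x in a..c, (c - x) * |f' x| = ∫ x in a..c, (x - a) * |φ x| := by
      have h := intervalIntegral.integral_comp_sub_left (a := a) (b := c)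
        (fun y => (c - y) * |f' y|) (a + c)
      simp only [add_sub_cancel_left, add_sub_cancel_right] at h
      rw [← h]
      apply intervalIntegral.integral_congr
      intro x _
      rw [hφdef]
      ring_nf
    have habsl : |∫ x in a..c, (x - c) * f' x| ≤ ∫ x in a..c, (c - x) * |f' x| := by
      calc |∫ x in a..c, (x - c) * f' x| ≤ ∫ x in a..c, |(x - c) * f' x| :=
            intervalIntegral.abs_integral_le_integral_abs hac.le
        _ = ∫ x in a..c, (c - x) * |f' x| := by
            apply intervalIntegral.integral_congr
            intro x hx
            rw [Set.uIcc_of_le hac.le] at hx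
            show |(x - c) * f' x| = (c - x) * |f' x|
            rw [abs_mul, abs_sub_comm, abs_of_nonneg (by linarith [hx.2] : (0:ℝ) ≤ c - x)]
    have hφmidpt : φ ((a + c)/2) = f' ((3*a + b)/4) := by
      rw [hφdef]
      norm_num
      congr 1
      rw [hc]; ring
    have hleft : |∫ x in a..c, (x - c) * f' x|
        ≤ (c - a)^2 * (1/(p+1)) ^ (1/p) * |f' ((3*a + b)/4)| := by
      rw [← hφmidpt]
      calc |∫ x in a..c, (x - c) * f' x| ≤ ∫ x in a..c, (c - x) * |f' x| := habsl
        _ = ∫ x in a..c, (x - a) * |φ x| := hrefl_eq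
        _ ≤ (c - a)^2 * (1/(p+1)) ^ (1/p) * |φ ((a + c)/2)| := hleft0
    -- right half
    have hf'cb : IntervalIntegrable f' volume c b :=
      hint.mono_set (by
        rw [Set.uIcc_of_le hcb.le, Set.uIcc_of_le hab.le]
        exact Set.Icc_subset_Icc hac.le le_rfl)
    have hcbsub : ∀ x, x ∈ Set.Icc c b → x ∈ Set.Icc a b :=
      fun x hx => ⟨hac.le.trans hx.1, hx.2⟩
    have hrmid : ∀ x ∈ Set.Icc c b,
        |f' x| ^ q + |f' (c + b - x)| ^ q ≤ 2 * |f' ((c + b)/2)| ^ q := by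
      intro x hx
      have hy : c + b - x ∈ Set.Icc a b :=
        ⟨by linarith [hx.2, hac.le], by linarith [hx.1]⟩
      have h := hmid2 x (hcbsub x hx) (c+b-x) hy
      rw [show (x + (c + b - x))/2 = (c+b)/2 by ring] at h
      exact h
    have hright0 := half_bound hpq' hcb hf'cb (fun x hx => hbd x (hcbsub x hx)) hrmid
    have hrmidpt : ((c + b)/2) = (3*b + a)/4 := by rw [hc]; ring
    have hright : |∫ x in c..b, (x - c) * f' x|
        ≤ (b - c)^2 * (1/(p+1)) ^ (1/p) * |f' ((3*b + a)/4)| := by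
      rw [← hrmidpt]
      calc |∫ x in c..b, (x - c) * f' x| ≤ ∫ x in c..b, |(x - c) * f' x| :=
            intervalIntegral.abs_integral_le_integral_abs hcb.le
        _ = ∫ x in c..b, (x - c) * |f' x| := by
            apply intervalIntegral.integral_congr
            intro x hx
            rw [Set.uIcc_of_le hcb.le] at hx
            show |(x - c) * f' x| = (x - c) * |f' x|
            rw [abs_mul, abs_of_nonneg (by linarith [hx.1] : (0:ℝ) ≤ x - c)]
        _ ≤ (b - c)^2 * (1/(p+1)) ^ (1/p) * |f' ((c + b)/2)| := hright0
    -- assemble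
    have hlhs : (f a + f b)/2 - (1/(b-a)) * ∫ x in a..b, f x
        = (1/(b-a)) * ∫ x in a..b, (x - c) * f' x := by
      rw [parts]
      have : b - c = (b-a)/2 := by rw [hc]; ring
      have h2 : a - c = -((b-a)/2) := by rw [hc]; ring
      rw [this, h2]
      have hba : b - a ≠ 0 := by linarith
      field_simp
      ring
    rw [hlhs, abs_mul, abs_of_nonneg (one_div_nonneg.mpr (by linarith : (0:ℝ) ≤ b - a))]
    have hsum : |∫ x in a..b, (x - c) * f' x|
        ≤ (c - a)^2 * (1/(p+1)) ^ (1/p) * |f' ((3*a + b)/4)|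
          + (b - c)^2 * (1/(p+1)) ^ (1/p) * |f' ((3*b + a)/4)| := by
      rw [← hsplit]
      calc |(∫ x in a..c, (x - c) * f' x) + (∫ x in c..b, (x - c) * f' x)|
          ≤ |∫ x in a..c, (x - c) * f' x| + |∫ x in c..b, (x - c) * f' x| := abs_add_le _ _
        _ ≤ _ := add_le_add hleft hright
    have hca : c - a = (b-a)/2 := by rw [hc]; ring
    have hbc : b - c = (b-a)/2 := by rw [hc]; ring
    rw [hca, hbc] at hsum
    calc (1/(b-a)) * |∫ x in a..b, (x - c) * f' x|
        ≤ (1/(b-a)) * (((b-a)/2)^2 * (1/(p+1)) ^ (1/p) * |f' ((3*a + b)/4)|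
            + ((b-a)/2)^2 * (1/(p+1)) ^ (1/p) * |f' ((3*b + a)/4)|) :=
          mul_le_mul_of_nonneg_left hsum (one_div_nonneg.mpr (by linarith : (0:ℝ) ≤ b - a))
      _ = ((b - a)/4) * (1/(p+1)) ^ (1/p) * (|f' ((3*b + a)/4)| + |f' ((3*a + b)/4)|) := by
          have hba : b - a ≠ 0 := by linarith
          field_simp
          ring
end

section
/- Let f be differentiable on I° with f' integrable on [a,b], a < b, q > 1 with 1/p+1/q = 1, and |f'|^q concave on [a,b]. Then |f((a+b)/2) - (1/(b-a))∫ₐᵇ f(x)dx| ≤ ((b-a)/4)(1/(p+1))^{1/p}[|f'((3b+a)/4)| + |f'((3a+b)/4)|]. -/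
open MeasureTheory Set intervalIntegral

/-- Reflection ("Jensen") bound for concave functions. -/
lemma reflect_bound {H : ℝ → ℝ} {c d : ℝ} (hcd : c ≤ d)
    (hconc : ConcaveOn ℝ (Set.Icc c d) H)
    (hint : IntervalIntegrable H volume c d) :
    (∫ x in c..d, H x) ≤ (d - c) * H ((c + d) / 2) := by
  have h0 : c + d - d = c := by ring
  have h1 : c + d - c = d := by ring
  have hrefl : (∫ x in c..d, H (c + d - x)) = ∫ x in c..d, H x := by
    rw [intervalIntegral.integral_comp_sub_left H (c + d), h0, h1]
  have hint2 : IntervalIntegrable (fun x => H (c + d - x)) volume c d := by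
    have := (hint.comp_sub_left (c + d)).symm
    rwa [h0, h1] at this
  have key : ∀ x ∈ Set.Icc c d, H x + H (c + d - x) ≤ 2 * H ((c + d) / 2) := by
    intro x hx
    have hy : c + d - x ∈ Set.Icc c d := ⟨by linarith [hx.2], by linarith [hx.1]⟩
    have h2 := hconc.2 hx hy (by norm_num : (0:ℝ) ≤ 1/2) (by norm_num : (0:ℝ) ≤ 1/2)
      (by norm_num)
    simp only [smul_eq_mul] at h2
    have harg : (1/2 : ℝ) * x + (1/2 : ℝ) * (c + d - x) = (c + d) / 2 := by ring
    rw [harg] at h2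
    linarith
  have hmono : (∫ x in c..d, (H x + H (c + d - x)))
      ≤ ∫ _x in c..d, (2 * H ((c + d) / 2)) :=
    intervalIntegral.integral_mono_on hcd (hint.add hint2) intervalIntegrable_const key
  rw [intervalIntegral.integral_add hint hint2, hrefl] at hmono
  rw [intervalIntegral.integral_const, smul_eq_mul] at hmono
  linarith

/-- Hölder + reflection bound on one half. -/
lemma half_bound_s14 {g w : ℝ → ℝ} {c d p q M : ℝ} (hcd : c < d)
    (hpq : Real.HolderConjugate p q)
    (hw0 : ∀ x ∈ Set.Icc c d, 0 ≤ w x) (hwb : ∀ x ∈ Set.Icc c d, w x ≤ d - c)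
    (hwc : Continuous w)
    (hwp : (∫ x in c..d, w x ^ p) = (d - c) ^ (p + 1) / (p + 1))
    (hgm : AEStronglyMeasurable g (volume.restrict (Set.Ioc c d)))
    (hM : ∀ x ∈ Set.Icc c d, |g x| ≤ M)
    (hconc : ConcaveOn ℝ (Set.Icc c d) (fun x => |g x| ^ q)) :
    (∫ x in c..d, w x * |g x|) ≤ (d - c) ^ 2 * (1/(p+1)) ^ (1/p) * |g ((c + d) / 2)| := by
  have hp0 : 0 < p := hpq.pos
  have hq0 : 0 < q := hpq.symm.pos
  have hdc : 0 < d - c := by linarith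
  haveI : Fact (volume (Set.Ioc c d) < ⊤) := ⟨measure_Ioc_lt_top⟩
  set μ := volume.restrict (Set.Ioc c d) with hμ
  have haes : ∀ᵐ x ∂μ, x ∈ Set.Ioc c d := ae_restrict_mem measurableSet_Ioc
  -- Memℒp for w
  have hmw : MemLp w (ENNReal.ofReal p) μ := by
    refine MemLp.of_bound hwc.aestronglyMeasurable (d - c) ?_
    filter_upwards [haes] with x hx
    have hx' : x ∈ Set.Icc c d := Set.Ioc_subset_Icc_self hx
    rw [Real.norm_eq_abs, abs_of_nonneg (hw0 x hx')]
    exact hwb x hx'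
  -- Memℒp for |g|
  have hgabs : AEStronglyMeasurable (fun x => |g x|) μ := by
    simpa [Real.norm_eq_abs] using hgm.norm
  have hmg : MemLp (fun x => |g x|) (ENNReal.ofReal q) μ := by
    refine MemLp.of_bound hgabs M ?_
    filter_upwards [haes] with x hx
    rw [Real.norm_eq_abs, abs_abs]
    exact hM x (Set.Ioc_subset_Icc_self hx)
  -- Hölder
  have holder := MeasureTheory.integral_mul_le_Lp_mul_Lq_of_nonneg hpq
    (f := w) (g := fun x => |g x|)
    (Filter.Eventually.mono haes fun x hx => hw0 x (Set.Ioc_subset_Icc_self hx))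
    (Filter.Eventually.of_forall fun x => abs_nonneg _) hmw hmg
  -- Integrability of |g|^q
  have hInt : IntervalIntegrable (fun x => |g x| ^ q) volume c d := by
    rw [intervalIntegrable_iff_integrableOn_Ioc_of_le hcd.le]
    have := hmg.integrable_norm_rpow (by simp [hq0] : ENNReal.ofReal q ≠ 0)
      (by simp : ENNReal.ofReal q ≠ ⊤)
    rw [ENNReal.toReal_ofReal hq0.le] at this
    exact (by simpa [Real.norm_eq_abs, abs_abs] using this : Integrable (fun x => |g x| ^ q) μ)
  -- reflection bound
  have hjen : (∫ x in c..d, |g x| ^ q) ≤ (d - c) * |g ((c + d)/2)| ^ q :=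
    reflect_bound hcd.le hconc hInt
  have hjen' : (∫ x in Set.Ioc c d, |g x| ^ q) ≤ (d - c) * |g ((c + d)/2)| ^ q := by
    rwa [intervalIntegral.integral_of_le hcd.le] at hjen
  have hIqnn : 0 ≤ ∫ x in Set.Ioc c d, |g x| ^ q :=
    MeasureTheory.integral_nonneg fun x => Real.rpow_nonneg (abs_nonneg _) q
  -- second factor bound
  have h2 : (∫ x in Set.Ioc c d, |g x| ^ q) ^ (1/q)
      ≤ (d - c) ^ (1/q) * |g ((c + d)/2)| := by
    calc (∫ x in Set.Ioc c d, |g x| ^ q) ^ (1/q)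
        ≤ ((d - c) * |g ((c + d)/2)| ^ q) ^ (1/q) :=
          Real.rpow_le_rpow hIqnn hjen' (by positivity)
      _ = (d - c) ^ (1/q) * (|g ((c + d)/2)| ^ q) ^ (1/q) :=
          Real.mul_rpow hdc.le (Real.rpow_nonneg (abs_nonneg _) q)
      _ = (d - c) ^ (1/q) * |g ((c + d)/2)| := by
          rw [← Real.rpow_mul (abs_nonneg _), mul_one_div_cancel hq0.ne', Real.rpow_one]
  -- first factor
  have hwp' : (∫ x in Set.Ioc c d, w x ^ p) = (d - c) ^ (p + 1) / (p + 1) := by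
    rwa [intervalIntegral.integral_of_le hcd.le] at hwp
  have hp1 : (0:ℝ) < p + 1 := by linarith
  have h1 : ((∫ x in Set.Ioc c d, w x ^ p) ^ (1/p) : ℝ)
      = (d - c) ^ ((p+1)/p) * (1/(p+1)) ^ (1/p) := by
    rw [hwp', div_eq_mul_one_div,
      Real.mul_rpow (Real.rpow_nonneg hdc.le _) (by positivity),
      ← Real.rpow_mul hdc.le]
    ring_nf
  -- exponent arithmetic
  have hexp : (p+1)/p + 1/q = 2 := by
    have h := hpq.inv_add_inv_eq_one
    rw [inv_eq_one_div, inv_eq_one_div] at h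
    field_simp
    field_simp at h
    linarith [h]
  have habs_mid : (0:ℝ) ≤ |g ((c + d)/2)| := abs_nonneg _
  calc (∫ x in c..d, w x * |g x|)
      = ∫ x in Set.Ioc c d, w x * |g x| := intervalIntegral.integral_of_le hcd.le
    _ ≤ (∫ x in Set.Ioc c d, w x ^ p) ^ (1/p) * (∫ x in Set.Ioc c d, |g x| ^ q) ^ (1/q) :=
        holder
    _ ≤ ((d - c) ^ ((p+1)/p) * (1/(p+1)) ^ (1/p)) * ((d - c) ^ (1/q) * |g ((c + d)/2)|) := by
        rw [h1]
        refine mul_le_mul_of_nonneg_left h2 (by positivity)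
    _ = (d - c) ^ ((p+1)/p + 1/q) * (1/(p+1)) ^ (1/p) * |g ((c + d)/2)| := by
        rw [Real.rpow_add hdc]; ring
    _ = (d - c) ^ 2 * (1/(p+1)) ^ (1/p) * |g ((c + d)/2)| := by
        rw [hexp]
        norm_num [Real.rpow_two]

lemma concave_bound {H : ℝ → ℝ} {a b : ℝ} (hab : a < b)
    (hconc : ConcaveOn ℝ (Set.Icc a b) H) :
    ∀ x ∈ Set.Icc a b, H x ≤ 2 * H ((a + b)/2) - min (H a) (H b) := by
  intro x hx
  have hba : (0:ℝ) < b - a := by linarith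
  have hy : a + b - x ∈ Set.Icc a b := ⟨by linarith [hx.2], by linarith [hx.1]⟩
  set y := a + b - x with hydef
  -- midpoint inequality
  have h2 := hconc.2 hx hy (by norm_num : (0:ℝ) ≤ 1/2) (by norm_num : (0:ℝ) ≤ 1/2)
    (by norm_num)
  simp only [smul_eq_mul] at h2
  have harg : (1/2 : ℝ) * x + (1/2 : ℝ) * y = (a + b)/2 := by rw [hydef]; ring
  rw [harg] at h2
  -- lower bound on H y
  have hl0 : 0 ≤ (b - y)/(b - a) := div_nonneg (by linarith [hy.2]) hba.le
  have hl1 : 0 ≤ (y - a)/(b - a) := div_nonneg (by linarith [hy.1]) hba.le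
  have hsum : (b - y)/(b - a) + (y - a)/(b - a) = 1 := by field_simp; ring
  have h3 := hconc.2 (Set.left_mem_Icc.2 hab.le) (Set.right_mem_Icc.2 hab.le) hl0 hl1 hsum
  simp only [smul_eq_mul] at h3
  have harg2 : (b - y)/(b - a) * a + (y - a)/(b - a) * b = y := by field_simp; ring
  rw [harg2] at h3
  have p1 : (b - y)/(b - a) * min (H a) (H b) ≤ (b - y)/(b - a) * H a :=
    mul_le_mul_of_nonneg_left (min_le_left _ _) hl0
  have p2 : (y - a)/(b - a) * min (H a) (H b) ≤ (y - a)/(b - a) * H b :=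
    mul_le_mul_of_nonneg_left (min_le_right _ _) hl1
  have hmin : min (H a) (H b) ≤ H y := by
    have : min (H a) (H b) = ((b - y)/(b - a) + (y - a)/(b - a)) * min (H a) (H b) := by
      rw [hsum, one_mul]
    rw [this, add_mul]
    linarith
  linarith

theorem stmt_14 (I : Set ℝ) (f f' : ℝ → ℝ) (a b p q : ℝ)
    (hab : a < b) (hI : Set.Icc a b ⊆ interior I)
    (hq : 1 < q) (hpq : 1/p + 1/q = 1)
    (hder : ∀ x ∈ interior I, HasDerivAt f (f' x) x)
    (hint : IntervalIntegrable f' volume a b)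
    (hconc : ConcaveOn ℝ (Set.Icc a b) (fun x => |f' x| ^ q)) :
    |f ((a + b)/2) - (1 / (b - a)) * ∫ x in a..b, f x|
      ≤ ((b - a)/4) * (1/(p+1)) ^ (1/p) *
        (|f' ((3*b + a)/4)| + |f' ((3*a + b)/4)|) := by
  have hq0 : (0:ℝ) < q := lt_trans one_pos hq
  have hba : (0:ℝ) < b - a := by linarith
  set m : ℝ := (a + b)/2 with hm
  have ham : a < m := by rw [hm]; linarith
  have hmb : m < b := by rw [hm]; linarith
  -- conjugate exponent facts
  have h1q : 0 < 1/q := by positivity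
  have h1q' : 1/q < 1 := by rw [div_lt_one hq0]; exact hq
  have h1p : 1/p = 1 - 1/q := by linarith
  have hp_pos : 0 < p := by
    have : 0 < 1/p := by rw [h1p]; linarith
    exact (one_div_pos).mp this
  have hp : 1 < p := by
    have h2 : 1/p < 1 := by rw [h1p]; linarith
    rw [div_lt_one hp_pos] at h2; exact h2
  have hconj : Real.HolderConjugate p q :=
    Real.holderConjugate_iff.2 ⟨hp, by rw [inv_eq_one_div, inv_eq_one_div]; exact hpq⟩
  -- bound on |f'| on [a,b]
  set H : ℝ → ℝ := fun x => |f' x| ^ q with hH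
  set C : ℝ := 2 * H ((a + b)/2) - min (H a) (H b) with hC
  have hHb : ∀ x ∈ Set.Icc a b, H x ≤ C := concave_bound hab hconc
  have hC0 : 0 ≤ C := le_trans (Real.rpow_nonneg (abs_nonneg _) q)
    (hHb a (Set.left_mem_Icc.2 hab.le))
  set M : ℝ := C ^ (1/q) with hMdef
  have hM : ∀ x ∈ Set.Icc a b, |f' x| ≤ M := by
    intro x hx
    have h1 : (H x) ^ (1/q) ≤ C ^ (1/q) :=
      Real.rpow_le_rpow (Real.rpow_nonneg (abs_nonneg _) q) (hHb x hx) (by positivity)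
    rwa [hH, ← Real.rpow_mul (abs_nonneg _), mul_one_div_cancel hq0.ne', Real.rpow_one] at h1
  -- measurability of f'
  have hf'meas : AEStronglyMeasurable f' (volume.restrict (Set.Ioc a b)) :=
    hint.1.aestronglyMeasurable
  have hmeas1 : AEStronglyMeasurable f' (volume.restrict (Set.Ioc a m)) :=
    hf'meas.mono_measure (Measure.restrict_mono (Set.Ioc_subset_Ioc le_rfl hmb.le) le_rfl)
  have hmeas2 : AEStronglyMeasurable f' (volume.restrict (Set.Ioc m b)) :=
    hf'meas.mono_measure (Measure.restrict_mono (Set.Ioc_subset_Ioc ham.le le_rfl) le_rfl)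
  -- integrability of f and f' on halves
  have hIccm1 : Set.Icc a m ⊆ Set.Icc a b := Set.Icc_subset_Icc le_rfl hmb.le
  have hIccm2 : Set.Icc m b ⊆ Set.Icc a b := Set.Icc_subset_Icc ham.le le_rfl
  have hfcont : ContinuousOn f (Set.Icc a b) := fun x hx =>
    ((hder x (hI hx)).continuousAt).continuousWithinAt
  have hfi1 : IntervalIntegrable f volume a m :=
    (hfcont.mono (by rw [Set.uIcc_of_le ham.le]; exact hIccm1)).intervalIntegrable
  have hfi2 : IntervalIntegrable f volume m b :=
    (hfcont.mono (by rw [Set.uIcc_of_le hmb.le]; exact hIccm2)).intervalIntegrable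
  have hint1 : IntervalIntegrable f' volume a m :=
    hint.mono_set (by rw [Set.uIcc_of_le ham.le, Set.uIcc_of_le hab.le]; exact hIccm1)
  have hint2 : IntervalIntegrable f' volume m b :=
    hint.mono_set (by rw [Set.uIcc_of_le hmb.le, Set.uIcc_of_le hab.le]; exact hIccm2)
  -- integration by parts on both halves
  set A : ℝ := ∫ x in a..m, (x - a) * f' x with hA
  set B : ℝ := ∫ x in m..b, (x - b) * f' x with hB
  have hA' : A = (m - a) * f m - ∫ x in a..m, f x := by
    have := intervalIntegral.integral_mul_deriv_eq_deriv_mul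
      (u := fun x => x - a) (u' := fun _ => (1:ℝ)) (v := f) (v' := f')
      (fun x _ => (hasDerivAt_id x).sub_const a)
      (fun x hx => hder x (hI (hIccm1 (by rwa [Set.uIcc_of_le ham.le] at hx))))
      intervalIntegrable_const hint1
    simpa using this
  have hB' : B = (b - m) * f m - ∫ x in m..b, f x := by
    have := intervalIntegral.integral_mul_deriv_eq_deriv_mul
      (u := fun x => x - b) (u' := fun _ => (1:ℝ)) (v := f) (v' := f')
      (fun x _ => (hasDerivAt_id x).sub_const b)
      (fun x hx => hder x (hI (hIccm2 (by rwa [Set.uIcc_of_le hmb.le] at hx))))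
      intervalIntegrable_const hint2
    simp at this
    rw [hB, this]
    ring
  have hsplit : (∫ x in a..m, f x) + ∫ x in m..b, f x = ∫ x in a..b, f x :=
    integral_add_adjacent_intervals hfi1 hfi2
  have hABsum : A + B = (b - a) * f m - ∫ x in a..b, f x := by
    rw [hA', hB', ← hsplit, hm]; ring
  have heq : f m - (1/(b - a)) * ∫ x in a..b, f x = (A + B) / (b - a) := by
    rw [hABsum]; field_simp
  -- bound |A| and |B| by weighted integrals of |f'|
  have hAbound : |A| ≤ ∫ x in a..m, (x - a) * |f' x| := by
    calc |A| ≤ ∫ x in a..m, |(x - a) * f' x| :=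
          intervalIntegral.abs_integral_le_integral_abs ham.le
      _ = ∫ x in a..m, (x - a) * |f' x| := by
          refine intervalIntegral.integral_congr fun x hx => ?_
          rw [Set.uIcc_of_le ham.le] at hx
          rw [abs_mul, abs_of_nonneg (by linarith [hx.1] : (0:ℝ) ≤ x - a)]
  have hBbound : |B| ≤ ∫ x in m..b, (b - x) * |f' x| := by
    calc |B| ≤ ∫ x in m..b, |(x - b) * f' x| :=
          intervalIntegral.abs_integral_le_integral_abs hmb.le
      _ = ∫ x in m..b, (b - x) * |f' x| := by
          refine intervalIntegral.integral_congr fun x hx => ?_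
          rw [Set.uIcc_of_le hmb.le] at hx
          rw [abs_mul, abs_of_nonpos (by linarith [hx.2] : x - b ≤ 0), neg_sub]
  -- Hölder + Jensen on each half
  have hwp1 : (∫ x in a..m, (x - a) ^ p) = (m - a) ^ (p + 1) / (p + 1) := by
    have h := intervalIntegral.integral_comp_sub_right (a := a) (b := m)
      (fun x => x ^ p) a
    rw [sub_self] at h
    rw [h, integral_rpow (Or.inl (by linarith : (-1:ℝ) < p)),
      Real.zero_rpow (by positivity), sub_zero]
  have hwp2 : (∫ x in m..b, (b - x) ^ p) = (b - m) ^ (p + 1) / (p + 1) := by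
    have h := intervalIntegral.integral_comp_sub_left (a := m) (b := b)
      (fun x => x ^ p) b
    rw [sub_self] at h
    rw [h, integral_rpow (Or.inl (by linarith : (-1:ℝ) < p)),
      Real.zero_rpow (by positivity), sub_zero]
  have hhalf1 : (∫ x in a..m, (x - a) * |f' x|)
      ≤ (m - a) ^ 2 * (1/(p+1)) ^ (1/p) * |f' ((a + m)/2)| :=
    half_bound_s14 ham hconj (fun x hx => by linarith [hx.1]) (fun x hx => by linarith [hx.2])
      (by continuity) hwp1 hmeas1 (fun x hx => hM x (hIccm1 hx))
      (hconc.subset hIccm1 (convex_Icc a m))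
  have hhalf2 : (∫ x in m..b, (b - x) * |f' x|)
      ≤ (b - m) ^ 2 * (1/(p+1)) ^ (1/p) * |f' ((m + b)/2)| :=
    half_bound_s14 hmb hconj (fun x hx => by linarith [hx.2]) (fun x hx => by linarith [hx.1])
      (by continuity) hwp2 hmeas2 (fun x hx => hM x (hIccm2 hx))
      (hconc.subset hIccm2 (convex_Icc m b))
  -- arguments of f'
  have harg1 : (a + m)/2 = (3*a + b)/4 := by rw [hm]; ring
  have harg2 : (m + b)/2 = (3*b + a)/4 := by rw [hm]; ring
  rw [harg1] at hhalf1
  rw [harg2] at hhalf2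
  have hma : m - a = (b - a)/2 := by rw [hm]; ring
  have hbm : b - m = (b - a)/2 := by rw [hm]; ring
  rw [hma] at hhalf1
  rw [hbm] at hhalf2
  -- final assembly
  have hCp : (0:ℝ) ≤ (1/(p+1)) ^ (1/p) := Real.rpow_nonneg (by positivity) _
  calc |f m - (1/(b - a)) * ∫ x in a..b, f x|
      = |A + B| / (b - a) := by rw [heq, abs_div, abs_of_pos hba]
    _ ≤ (|A| + |B|) / (b - a) := by gcongr; exact abs_add_le A B
    _ ≤ (((b - a)/2) ^ 2 * (1/(p+1)) ^ (1/p) * |f' ((3*a + b)/4)|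
        + ((b - a)/2) ^ 2 * (1/(p+1)) ^ (1/p) * |f' ((3*b + a)/4)|) / (b - a) := by
        gcongr
        · exact hAbound.trans hhalf1
        · exact hBbound.trans hhalf2
    _ = ((b - a)/4) * (1/(p+1)) ^ (1/p) * (|f' ((3*b + a)/4)| + |f' ((3*a + b)/4)|) := by
        field_simp
        ring
end

section
/- Let f be differentiable on I° with f' integrable on [a,b], a < b, q > 1 with 1/p+1/q = 1, and |f'|^q concave on [a,b]. Then |(f(a)+f(b))/2 - (1/(b-a))∫ₐᵇ f(x)dx| ≤ ((b-a)/2)(1/(p+1))^{1/p}|f'((a+b)/2)| and |f((a+b)/2) - (1/(b-a))∫ₐᵇ f(x)dx| ≤ ((b-a)/2)(1/(p+1))^{1/p}|f'((a+b)/2)|. -/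
open MeasureTheory Set intervalIntegral

lemma refl_bound16 (k g : ℝ → ℝ) (a b M : ℝ) (hab : a ≤ b)
    (hk : Continuous k) (hknn : ∀ x ∈ Icc a b, 0 ≤ k x)
    (hsym : ∀ x, k (a + b - x) = k x)
    (hg : IntervalIntegrable g volume a b)
    (hpair : ∀ x ∈ Icc a b, g x + g (a + b - x) ≤ 2 * M) :
    ∫ x in a..b, k x * g x ≤ M * ∫ x in a..b, k x := by
  have hh : IntervalIntegrable (fun x => k x * g x) volume a b :=
    hg.continuousOn_mul hk.continuousOn
  have hrefl : IntervalIntegrable (fun x => k x * g (a + b - x)) volume a b := by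
    have h1 : IntervalIntegrable (fun x => k (a+b-x) * g (a + b - x)) volume a b := by
      have := hh.comp_sub_left (a + b)
      have e1 : a + b - a = b := by ring
      have e2 : a + b - b = a := by ring
      rw [e1, e2] at this
      exact this.symm
    refine h1.congr (fun x _ => ?_)
    rw [hsym]
  have hint_refl : (∫ x in a..b, k x * g (a + b - x)) = ∫ x in a..b, k x * g x := by
    have := integral_comp_sub_left (fun x => k x * g x) (a + b) (a := a) (b := b)
    have e1 : a + b - a = b := by ring
    have e2 : a + b - b = a := by ring
    rw [e1, e2] at this
    calc (∫ x in a..b, k x * g (a + b - x))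
        = ∫ x in a..b, k (a+b-x) * g (a + b - x) := by
          refine integral_congr fun x _ => ?_; rw [hsym]
      _ = ∫ x in a..b, k x * g x := this
  have hmono : (∫ x in a..b, k x * g x + k x * g (a + b - x))
      ≤ ∫ x in a..b, (2 * M) * k x := by
    refine integral_mono_on hab (hh.add hrefl)
      ((hk.intervalIntegrable a b).const_mul _) fun x hx => ?_
    have := hpair x hx
    have hk0 := hknn x hx
    nlinarith
  rw [integral_add hh hrefl, hint_refl, intervalIntegral.integral_const_mul] at hmono
  linarith

lemma pair16 (f' : ℝ → ℝ) (a b q : ℝ) (hq : 1 < q)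
    (hconc : ConcaveOn ℝ (Set.Icc a b) (fun x => |f' x| ^ q)) :
    ∀ x ∈ Icc a b, |f' x| + |f' (a + b - x)| ≤ 2 * |f' ((a + b)/2)| := by
  intro x hx
  have hx' : a + b - x ∈ Icc a b := ⟨by linarith [hx.2], by linarith [hx.1]⟩
  have key := hconc.2 hx hx' (by norm_num : (0:ℝ) ≤ 1/2) (by norm_num : (0:ℝ) ≤ 1/2)
    (by norm_num)
  have harg : (1/2 : ℝ) • x + (1/2 : ℝ) • (a + b - x) = (a + b)/2 := by
    simp only [smul_eq_mul]; ring
  rw [harg] at key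
  simp only [smul_eq_mul] at key
  set u := |f' x|
  set v := |f' (a + b - x)|
  set M := |f' ((a + b)/2)|
  have conv := (convexOn_rpow hq.le).2 (mem_Ici.2 (abs_nonneg (f' x)))
    (mem_Ici.2 (abs_nonneg (f' (a + b - x)))) (by norm_num : (0:ℝ) ≤ 1/2)
    (by norm_num : (0:ℝ) ≤ 1/2) (by norm_num)
  simp only [smul_eq_mul] at conv
  by_contra hcon
  push_neg at hcon
  have hM : M < 1/2 * u + 1/2 * v := by linarith
  have := Real.rpow_lt_rpow (abs_nonneg _) hM (lt_trans one_pos hq)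
  linarith

lemma const16 (p : ℝ) (hp : 1 < p) : (1:ℝ)/2 ≤ (1/(p+1)) ^ (1/p) := by
  have hp0 : 0 < p := lt_trans one_pos hp
  have hbern : 1 + p ≤ (2:ℝ) ^ p := by
    have := one_add_mul_self_le_rpow_one_add (s := 1) (by norm_num) hp.le
    norm_num at this
    linarith
  have h2 : (p + 1) ^ (1/p) ≤ 2 := by
    have h1 : (p + 1) ^ (1/p) ≤ ((2:ℝ) ^ p) ^ (1/p) :=
      Real.rpow_le_rpow (by positivity) (by linarith) (by positivity)
    rwa [← Real.rpow_mul (by norm_num : (0:ℝ) ≤ 2),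
      mul_one_div_cancel hp0.ne',
      Real.rpow_one] at h1
  have hp1 : (0:ℝ) < p + 1 := by linarith
  rw [one_div (p+1), Real.inv_rpow hp1.le, one_div (2:ℝ)]
  exact inv_anti₀ (by positivity) h2

lemma cancel16 (c t Z : ℝ) (hc : c ≠ 0) : t - (1/c) * Z = (1/c) * (c * t - Z) := by
  field_simp

lemma lin_int_left (c d e : ℝ) : ∫ x in c..d, (e - x) = (d - c) * e - (d^2 - c^2)/2 := by
  rw [integral_sub intervalIntegrable_const intervalIntegrable_id, intervalIntegral.integral_const, integral_id]
  simp [smul_eq_mul]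

lemma lin_int_right (c d e : ℝ) : ∫ x in c..d, (x - e) = (d^2 - c^2)/2 - (d - c) * e := by
  rw [integral_sub intervalIntegrable_id intervalIntegrable_const, intervalIntegral.integral_const, integral_id]
  simp [smul_eq_mul]

theorem stmt_16 (I : Set ℝ) (f f' : ℝ → ℝ) (a b p q : ℝ)
    (hab : a < b) (hI : Set.Icc a b ⊆ interior I)
    (hq : 1 < q) (hpq : 1/p + 1/q = 1)
    (hder : ∀ x ∈ interior I, HasDerivAt f (f' x) x)
    (hint : IntervalIntegrable f' volume a b)
    (hconc : ConcaveOn ℝ (Set.Icc a b) (fun x => |f' x| ^ q)) :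
    |(f a + f b)/2 - (1 / (b - a)) * ∫ x in a..b, f x|
        ≤ ((b - a)/2) * (1/(p+1)) ^ (1/p) * |f' ((a + b)/2)| ∧
      |f ((a + b)/2) - (1 / (b - a)) * ∫ x in a..b, f x|
        ≤ ((b - a)/2) * (1/(p+1)) ^ (1/p) * |f' ((a + b)/2)| := by
  have hba : (0:ℝ) < b - a := by linarith
  set m : ℝ := (a + b)/2 with hmdef
  have ham : a ≤ m := by rw [hmdef]; linarith
  have hmb : m ≤ b := by rw [hmdef]; linarith
  have huIcc : uIcc a b = Icc a b := uIcc_of_le hab.le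
  set M : ℝ := |f' m| with hMdef
  have hM : 0 ≤ M := abs_nonneg _
  -- p > 1 and the constant bound
  have hq0 : (0:ℝ) < 1/q := by positivity
  have hq1 : 1/q < 1 := by
    rw [div_lt_one (by linarith : (0:ℝ) < q)]; exact hq
  have hip : 0 < 1/p := by linarith
  have hp0 : 0 < p := by
    rcases lt_trichotomy p 0 with h | h | h
    · exfalso; have : 1/p < 0 := by exact div_neg_of_pos_of_neg one_pos h
      linarith
    · exfalso; rw [h] at hip; simp at hip
    · exact h
  have hp1 : 1 < p := by
    have : 1/p < 1 := by linarith
    rw [div_lt_one hp0] at this; exact this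
  have hc : (1:ℝ)/2 ≤ (1/(p+1)) ^ (1/p) := const16 p hp1
  -- kernels
  set k1 : ℝ → ℝ := fun x => |x - m| with hk1def
  set k2 : ℝ → ℝ := fun x => min (x - a) (b - x) with hk2def
  have hk1c : Continuous k1 := (continuous_id.sub continuous_const).abs
  have hk2c : Continuous k2 :=
    (continuous_id.sub continuous_const).min (continuous_const.sub continuous_id)
  have habs : IntervalIntegrable (fun x => |f' x|) volume a b := hint.abs
  have hpair := pair16 f' a b q hq hconc
  -- kernel integrals
  have hk1int : (∫ x in a..b, k1 x) = (b-a)^2/4 := by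
    have h1 : (∫ x in a..m, k1 x) = ∫ x in a..m, (m - x) := by
      refine integral_congr fun x hx => ?_
      rw [uIcc_of_le ham] at hx
      simp only [hk1def]
      rw [abs_of_nonpos (by linarith [hx.2] : x - m ≤ 0)]; ring
    have h2 : (∫ x in m..b, k1 x) = ∫ x in m..b, (x - m) := by
      refine integral_congr fun x hx => ?_
      rw [uIcc_of_le hmb] at hx
      simp only [hk1def]
      rw [abs_of_nonneg (by linarith [hx.1] : (0:ℝ) ≤ x - m)]
    have hadd : (∫ x in a..m, k1 x) + ∫ x in m..b, k1 x = ∫ x in a..b, k1 x :=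
      integral_add_adjacent_intervals (hk1c.intervalIntegrable _ _) (hk1c.intervalIntegrable _ _)
    rw [← hadd, h1, h2, lin_int_left, lin_int_right, hmdef]; ring
  have hk2int : (∫ x in a..b, k2 x) = (b-a)^2/4 := by
    have h1 : (∫ x in a..m, k2 x) = ∫ x in a..m, (x - a) := by
      refine integral_congr fun x hx => ?_
      rw [uIcc_of_le ham] at hx
      simp only [hk2def]
      rw [min_eq_left (by rw [hmdef] at hx; linarith [hx.2] : x - a ≤ b - x)]
    have h2 : (∫ x in m..b, k2 x) = ∫ x in m..b, (b - x) := by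
      refine integral_congr fun x hx => ?_
      rw [uIcc_of_le hmb] at hx
      simp only [hk2def]
      rw [min_eq_right (by rw [hmdef] at hx; linarith [hx.1] : b - x ≤ x - a)]
    have hadd : (∫ x in a..m, k2 x) + ∫ x in m..b, k2 x = ∫ x in a..b, k2 x :=
      integral_add_adjacent_intervals (hk2c.intervalIntegrable _ _) (hk2c.intervalIntegrable _ _)
    rw [← hadd, h1, h2, lin_int_right, lin_int_left, hmdef]; ring
  -- the two kernel bounds
  have bound1 : (∫ x in a..b, k1 x * |f' x|) ≤ M * ((b-a)^2/4) := by
    rw [← hk1int]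
    refine refl_bound16 k1 (fun x => |f' x|) a b M hab.le hk1c
      (fun x _ => abs_nonneg _) (fun x => ?_) habs hpair
    simp only [hk1def]
    have : a + b - x - m = -(x - m) := by rw [hmdef]; ring
    rw [this, abs_neg]
  have bound2 : (∫ x in a..b, k2 x * |f' x|) ≤ M * ((b-a)^2/4) := by
    rw [← hk2int]
    refine refl_bound16 k2 (fun x => |f' x|) a b M hab.le hk2c
      (fun x hx => le_min (by linarith [hx.1]) (by linarith [hx.2])) (fun x => ?_) habs hpair
    simp only [hk2def]
    have e1 : a + b - x - a = b - x := by ring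
    have e2 : b - (a + b - x) = x - a := by ring
    rw [e1, e2, min_comm]
  -- integration by parts
  have ibp : ∀ c d e : ℝ, uIcc c d ⊆ Icc a b →
      ∫ x in c..d, (x - e) * f' x = (d-e)*f d - (c-e)*f c - ∫ x in c..d, f x := by
    intro c d e hsub
    have h := integral_mul_deriv_eq_deriv_mul (u := fun x => x - e) (v := f)
      (u' := fun _ => (1:ℝ)) (v' := f')
      (fun x hx => (hasDerivAt_id x).sub_const e)
      (fun x hx => hder x (hI (hsub hx)))
      intervalIntegrable_const
      (hint.mono_set (by rw [huIcc]; exact hsub))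
    simpa using h
  have hsub1 : uIcc a m ⊆ Icc a b := by rw [uIcc_of_le ham]; exact Icc_subset_Icc le_rfl hmb
  have hsub2 : uIcc m b ⊆ Icc a b := by rw [uIcc_of_le hmb]; exact Icc_subset_Icc ham le_rfl
  have id1 := ibp a b m (by rw [huIcc])
  have id2a := ibp a m a hsub1
  have id2b := ibp m b b hsub2
  have hfc : ∀ c d : ℝ, uIcc c d ⊆ Icc a b → IntervalIntegrable f volume c d := by
    intro c d hsub
    refine ContinuousOn.intervalIntegrable ?_
    exact fun x hx => ((hder x (hI (hsub hx))).continuousAt).continuousWithinAt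
  have hsplitf : (∫ x in a..m, f x) + ∫ x in m..b, f x = ∫ x in a..b, f x :=
    integral_add_adjacent_intervals (hfc a m hsub1) (hfc m b hsub2)
  have habs1 : |∫ x in a..b, (x - m) * f' x| ≤ M * ((b-a)^2/4) := by
    calc |∫ x in a..b, (x - m) * f' x| ≤ ∫ x in a..b, |(x - m) * f' x| :=
        intervalIntegral.abs_integral_le_integral_abs hab.le
      _ = ∫ x in a..b, k1 x * |f' x| := by
          refine integral_congr fun x _ => ?_
          simp only [hk1def]; exact abs_mul _ _
      _ ≤ M * ((b-a)^2/4) := bound1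
  have habs2a : |∫ x in a..m, (x - a) * f' x| ≤ ∫ x in a..m, k2 x * |f' x| := by
    calc |∫ x in a..m, (x - a) * f' x| ≤ ∫ x in a..m, |(x - a) * f' x| :=
        intervalIntegral.abs_integral_le_integral_abs ham
      _ = ∫ x in a..m, k2 x * |f' x| := by
          refine integral_congr fun x hx => ?_
          rw [uIcc_of_le ham] at hx
          simp only [hk2def]
          rw [abs_mul]
          congr 1
          rw [abs_of_nonneg (by linarith [hx.1] : (0:ℝ) ≤ x - a),
            min_eq_left (by rw [hmdef] at hx; linarith [hx.2] : x - a ≤ b - x)]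
  have habs2b : |∫ x in m..b, (x - b) * f' x| ≤ ∫ x in m..b, k2 x * |f' x| := by
    calc |∫ x in m..b, (x - b) * f' x| ≤ ∫ x in m..b, |(x - b) * f' x| :=
        intervalIntegral.abs_integral_le_integral_abs hmb
      _ = ∫ x in m..b, k2 x * |f' x| := by
          refine integral_congr fun x hx => ?_
          rw [uIcc_of_le hmb] at hx
          simp only [hk2def]
          rw [abs_mul]
          congr 1
          rw [abs_of_nonpos (by linarith [hx.2] : x - b ≤ 0),
            min_eq_right (by rw [hmdef] at hx; linarith [hx.1] : b - x ≤ x - a)]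
          ring
  have hk2fint : ∀ c d : ℝ, uIcc c d ⊆ Icc a b →
      IntervalIntegrable (fun x => k2 x * |f' x|) volume c d := fun c d hsub =>
    (habs.mono_set (by rw [huIcc]; exact hsub)).continuousOn_mul hk2c.continuousOn
  have hsplit2 : (∫ x in a..m, k2 x * |f' x|) + ∫ x in m..b, k2 x * |f' x|
      = ∫ x in a..b, k2 x * |f' x| :=
    integral_add_adjacent_intervals (hk2fint a m hsub1) (hk2fint m b hsub2)
  have hpos : (0:ℝ) < 1/(b-a) := by positivity
  have key : 0 ≤ ((b-a)/2 * M) * ((1/(p+1))^(1/p) - 1/2) :=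
    mul_nonneg (mul_nonneg (by linarith) hM) (by linarith)
  have e : (1/(b-a)) * (M * ((b-a)^2/4)) = (b-a)/4 * M := by field_simp
  have last : (1/(b-a)) * (M * ((b-a)^2/4)) ≤ (b-a)/2 * (1/(p+1))^(1/p) * M := by
    rw [e]; nlinarith [key]
  constructor
  · have hE1 : (f a + f b)/2 - (1/(b-a)) * ∫ x in a..b, f x
        = (1/(b-a)) * ∫ x in a..b, (x - m) * f' x := by
      rw [id1]
      set J := ∫ x in a..b, f x
      have hx : (b-m)*f b - (a-m)*f a - J = (b-a) * ((f a + f b)/2) - J := by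
        rw [hmdef]; ring
      rw [hx, ← cancel16 _ _ _ (ne_of_gt hba)]
    calc |(f a + f b)/2 - (1/(b-a)) * ∫ x in a..b, f x|
        = (1/(b-a)) * |∫ x in a..b, (x - m) * f' x| := by
          rw [hE1, abs_mul, abs_of_pos hpos]
      _ ≤ (1/(b-a)) * (M * ((b-a)^2/4)) := mul_le_mul_of_nonneg_left habs1 hpos.le
      _ ≤ (b-a)/2 * (1/(p+1))^(1/p) * M := last
  · have hE2 : f m - (1/(b-a)) * ∫ x in a..b, f x
        = (1/(b-a)) * ((∫ x in a..m, (x - a) * f' x) + ∫ x in m..b, (x - b) * f' x) := by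
      rw [id2a, id2b, ← hsplitf]
      set J1 := ∫ x in a..m, f x
      set J2 := ∫ x in m..b, f x
      have hx : ((m-a)*f m - (a-a)*f a - J1) + ((b-b)*f b - (m-b)*f m - J2)
          = (b-a) * f m - (J1 + J2) := by ring
      rw [hx, ← cancel16 _ _ _ (ne_of_gt hba)]
    calc |f m - (1/(b-a)) * ∫ x in a..b, f x|
        = (1/(b-a)) * |(∫ x in a..m, (x - a) * f' x) + ∫ x in m..b, (x - b) * f' x| := by
          rw [hE2, abs_mul, abs_of_pos hpos]
      _ ≤ (1/(b-a)) * (M * ((b-a)^2/4)) := by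
          refine mul_le_mul_of_nonneg_left ?_ hpos.le
          calc |(∫ x in a..m, (x - a) * f' x) + ∫ x in m..b, (x - b) * f' x|
              ≤ |∫ x in a..m, (x - a) * f' x| + |∫ x in m..b, (x - b) * f' x| := abs_add_le _ _
            _ ≤ (∫ x in a..m, k2 x * |f' x|) + ∫ x in m..b, k2 x * |f' x| :=
                add_le_add habs2a habs2b
            _ = ∫ x in a..b, k2 x * |f' x| := hsplit2
            _ ≤ M * ((b-a)^2/4) := bound2
      _ ≤ (b-a)/2 * (1/(p+1))^(1/p) * M := last
end

section
/- Let 0 < a < b, q ≥ 1, s ∈ (0, 1/q), and let A_α(x,y) = αx + (1-α)y denote the weighted arithmetic mean and L_{s+1}(a,b) = ((b^{s+2}-a^{s+2})/((s+2)(b-a)))^{1/(s+1)} denote the (s+1)-logarithmic mean. If αλ ≤ 1-α ≤ 1-λ(1-α) with α,λ ∈ [0,1], then |λ A_α(a^{s+1}, b^{s+1}) + (1-λ) A_α(a,b)^{s+1} - L_{s+1}(a,b)^{s+1}| ≤ (b-a)(s+1){γ₂^{1-1/q}(μ₁* b^{sq} + μ₂* a^{sq})^{1/q} + υ₂^{1-1/q}(η₃*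 b^{sq} + η₄* a^{sq})^{1/q}}, where γ₂ = (αλ)² - (1-α)(αλ-(1-α)/2), υ₂ = (1+(1-α)²)/2 - (λ+1)(1-α)(1-λ(1-α)), μ₁* = (αλ)^{sq+2}·2/((sq+1)(sq+2)) - αλ(1-α)^{sq+1}/(sq+1) + (1-α)^{sq+2}/(sq+2), μ₂* = (1-αλ)^{sq+2}·2/((sq+1)(sq+2)) - (1-αλ)(1+α^{sq+1})/(sq+1) + (1+α^{sq+2})/(sq+2), η₃* = 2(1-λ(1-α))^{sq+2}/((sq+1)(sq+2)) - (1+(1-α)^{sq+1})(1-λ(1-α))/(sq+1) + (1+(1-α)^{sq+2})/(sq+2), η₄* = (λ(1-α))^{sq+2}·2/((sq+1)(sq+2)) - λ(1-α)α^{sq+1}/(sq+1) + α^{sq+2}/(sq+2). -/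
open MeasureTheory intervalIntegral Set

private lemma cont_rpow {r : ℝ} (hr : 0 < r) : Continuous fun t : ℝ => t ^ r := by
  rw [continuous_iff_continuousAt]
  intro x
  exact Real.continuousAt_rpow_const x r (Or.inr hr.le)

private lemma hasDerivAt_rpow_shift {p : ℝ} (hp : 1 ≤ p) (t : ℝ) :
    HasDerivAt (fun x : ℝ => x ^ p) (p * t ^ (p - 1)) t :=
  Real.hasDerivAt_rpow_const (Or.inr hp)

private lemma rpow_add_le {x y p : ℝ} (hx : 0 ≤ x) (hy : 0 ≤ y) (hp : 0 ≤ p) (hp1 : p ≤ 1) :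
    (x + y) ^ p ≤ x ^ p + y ^ p := by
  lift x to NNReal using hx
  lift y to NNReal using hy
  have := NNReal.rpow_add_le_add_rpow x y hp hp1
  exact_mod_cast this

private lemma integral_tc {c x y : ℝ} :
    ∫ t in x..y, (t - c) * 1 = (y^2/2 - c*y) - (x^2/2 - c*x) := by
  apply intervalIntegral.integral_eq_sub_of_hasDerivAt
  · intro t _
    have hp : HasDerivAt (fun u : ℝ => u^2) ((2:ℕ)*t^(2-1)) t := hasDerivAt_pow 2 t
    have h1 := (hp.div_const 2).sub ((hasDerivAt_id t).const_mul c)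
    convert h1 using 1
    · funext u; simp
    · norm_num
  · exact Continuous.intervalIntegrable (by continuity) _ _

private lemma integral_tc_rpow {r c x y : ℝ} (hr : 0 < r) (hx : 0 ≤ x) (hxy : x ≤ y) :
    ∫ t in x..y, (t - c) * t ^ r
      = (y ^ (r+2) / (r+2) - c * y ^ (r+1) / (r+1))
        - (x ^ (r+2) / (r+2) - c * x ^ (r+1) / (r+1)) := by
  have h1 : (1:ℝ) ≤ r + 1 := by linarith
  have h2 : (1:ℝ) ≤ r + 2 := by linarith
  apply intervalIntegral.integral_eq_sub_of_hasDerivAt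
  · intro t ht
    rw [uIcc_of_le hxy] at ht
    have ht0 : 0 ≤ t := hx.trans ht.1
    have hD : HasDerivAt (fun u : ℝ => u ^ (r+2) / (r+2) - c * u ^ (r+1) / (r+1))
        ((r+2) * t ^ (r+2-1) / (r+2) - c * ((r+1) * t ^ (r+1-1)) / (r+1)) t :=
      ((hasDerivAt_rpow_shift h2 t).div_const _).sub
        (((hasDerivAt_rpow_shift h1 t).const_mul c).div_const _)
    refine hD.congr_deriv ?_
    have e1 : r + 2 - 1 = r + 1 := by ring
    have e2 : r + 1 - 1 = r := by ring
    rw [e1, e2]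
    have e3 : t ^ (r+1) = t ^ r * t := by
      rw [Real.rpow_add' ht0 (by linarith), Real.rpow_one]
    rw [e3]
    field_simp
  · apply Continuous.intervalIntegrable
    exact (continuous_id.sub continuous_const).mul (cont_rpow hr)

private lemma integral_tc_rpow' {r c x y : ℝ} (hr : 0 < r) (hxy : x ≤ y) (hy : y ≤ 1) :
    ∫ t in x..y, (t - c) * (1-t) ^ r
      = ((1-y) ^ (r+2) / (r+2) - (1-c) * (1-y) ^ (r+1) / (r+1))
        - ((1-x) ^ (r+2) / (r+2) - (1-c) * (1-x) ^ (r+1) / (r+1)) := by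
  have h1 : (1:ℝ) ≤ r + 1 := by linarith
  have h2 : (1:ℝ) ≤ r + 2 := by linarith
  apply intervalIntegral.integral_eq_sub_of_hasDerivAt
  · intro t ht
    rw [uIcc_of_le hxy] at ht
    have ht0 : 0 ≤ 1 - t := by linarith [ht.2]
    have hin : HasDerivAt (fun u : ℝ => 1 - u) (-1) t := (hasDerivAt_id t).const_sub 1
    have hp2 : HasDerivAt (fun u : ℝ => (1-u) ^ (r+2)) ((r+2) * (1-t) ^ (r+2-1) * (-1)) t :=
      (hasDerivAt_rpow_shift h2 (1-t)).comp t hin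
    have hp1 : HasDerivAt (fun u : ℝ => (1-u) ^ (r+1)) ((r+1) * (1-t) ^ (r+1-1) * (-1)) t :=
      (hasDerivAt_rpow_shift h1 (1-t)).comp t hin
    have hD : HasDerivAt (fun u : ℝ => (1-u) ^ (r+2) / (r+2) - (1-c) * (1-u) ^ (r+1) / (r+1))
        ((r+2) * (1-t) ^ (r+2-1) * (-1) / (r+2)
          - (1-c) * ((r+1) * (1-t) ^ (r+1-1) * (-1)) / (r+1)) t :=
      (hp2.div_const _).sub ((hp1.const_mul (1-c)).div_const _)
    refine hD.congr_deriv ?_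
    have e1 : r + 2 - 1 = r + 1 := by ring
    have e2 : r + 1 - 1 = r := by ring
    rw [e1, e2]
    have e3 : (1-t) ^ (r+1) = (1-t) ^ r * (1-t) := by
      rw [Real.rpow_add' ht0 (by linarith), Real.rpow_one]
    rw [e3]
    field_simp
    ring
  · apply Continuous.intervalIntegrable
    exact (continuous_id.sub continuous_const).mul
      ((cont_rpow hr).comp (continuous_const.sub continuous_id))

private lemma integral_kernel {a b s c x y : ℝ} (hab : a < b) (hs : 0 < s) :
    ∫ t in x..y, (t - c) * (t*b + (1-t)*a) ^ s
      = (((y - c) * (y*b+(1-y)*a)^(s+1) - (y*b+(1-y)*a)^(s+2)/((s+2)*(b-a)))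
        - ((x - c) * (x*b+(1-x)*a)^(s+1) - (x*b+(1-x)*a)^(s+2)/((s+2)*(b-a))))
        / ((s+1)*(b-a)) := by
  have hba : (0:ℝ) < b - a := by linarith
  have h1 : (1:ℝ) ≤ s + 1 := by linarith
  have h2 : (1:ℝ) ≤ s + 2 := by linarith
  rw [eq_div_iff (by positivity), ← intervalIntegral.integral_mul_const]
  apply intervalIntegral.integral_eq_sub_of_hasDerivAt
  · intro t _
    have hv : HasDerivAt (fun u : ℝ => u*b + (1-u)*a) (1*b + -1*a) t :=
      ((hasDerivAt_id t).mul_const b).add (((hasDerivAt_id t).const_sub 1).mul_const a)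
    set v := t*b + (1-t)*a with hvdef
    have hp1 : HasDerivAt (fun u : ℝ => (u*b+(1-u)*a) ^ (s+1))
        ((s+1) * v ^ (s+1-1) * (1*b + -1*a)) t :=
      by have := (hasDerivAt_rpow_shift h1 v).comp t hv; exact this
    have hp2 : HasDerivAt (fun u : ℝ => (u*b+(1-u)*a) ^ (s+2))
        ((s+2) * v ^ (s+2-1) * (1*b + -1*a)) t :=
      by have := (hasDerivAt_rpow_shift h2 v).comp t hv; exact this
    have hD : HasDerivAt
        (fun u : ℝ => (u - c) * (u*b+(1-u)*a)^(s+1) - (u*b+(1-u)*a)^(s+2)/((s+2)*(b-a)))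
        (1 * v^(s+1) + (t - c) * ((s+1) * v ^ (s+1-1) * (1*b + -1*a))
          - ((s+2) * v ^ (s+2-1) * (1*b + -1*a))/((s+2)*(b-a))) t :=
      (((hasDerivAt_id t).sub_const c).mul hp1).sub (hp2.div_const _)
    refine hD.congr_deriv ?_
    have e1 : s + 1 - 1 = s := by ring
    have e2 : s + 2 - 1 = s + 1 := by ring
    rw [e1, e2]
    field_simp
    ring
  · apply Continuous.intervalIntegrable
    exact (((continuous_id.sub continuous_const).mul
      ((cont_rpow hs).comp (by continuity)))).mul continuous_const

private lemma abs_weight_split {x y c : ℝ} (hxc : x ≤ c) (hcy : c ≤ y) {w : ℝ → ℝ}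
    (hw : Continuous w) :
    ∫ t in x..y, |t - c| * w t
      = (∫ t in c..y, (t - c) * w t) - ∫ t in x..c, (t - c) * w t := by
  have hc : Continuous fun t => |t - c| * w t :=
    ((continuous_id.sub continuous_const).abs).mul hw
  have hadd := intervalIntegral.integral_add_adjacent_intervals
    (f := fun t => |t - c| * w t) (hc.intervalIntegrable (μ := volume) x c)
    (hc.intervalIntegrable c y)
  rw [← hadd]
  have e1 : ∫ t in x..c, |t - c| * w t = - ∫ t in x..c, (t - c) * w t := by
    rw [← intervalIntegral.integral_neg]
    apply intervalIntegral.integral_congr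
    intro t ht
    rw [uIcc_of_le hxc] at ht
    show |t - c| * w t = -((t - c) * w t)
    rw [abs_of_nonpos (by linarith [ht.2])]
    ring
  have e2 : ∫ t in c..y, |t - c| * w t = ∫ t in c..y, (t - c) * w t := by
    apply intervalIntegral.integral_congr
    intro t ht
    rw [uIcc_of_le hcy] at ht
    show |t - c| * w t = (t - c) * w t
    rw [abs_of_nonneg (by linarith [ht.1])]
  rw [e1, e2]
  ring

private lemma weighted_holder {lo hi c q : ℝ} (hq : 1 ≤ q) (hlh : lo ≤ hi) {g : ℝ → ℝ}
    (hgc : Continuous g) (hg0 : ∀ t ∈ Icc lo hi, 0 ≤ g t) :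
    ∫ t in lo..hi, |t - c| * g t
      ≤ (∫ t in lo..hi, |t - c|) ^ (1 - 1/q) * (∫ t in lo..hi, |t - c| * g t ^ q) ^ (1/q) := by
  rcases eq_or_lt_of_le hq with hq1 | hq1
  · have h1 : ∀ t : ℝ, |t - c| * g t ^ q = |t - c| * g t := fun t => by
      rw [← hq1, Real.rpow_one]
    simp only [h1, ← hq1]
    norm_num
  · have hqpos : (0:ℝ) < q := lt_trans zero_lt_one hq1
    set p : ℝ := q / (q - 1) with hpdef
    have hpq : p.HolderConjugate q :=
      ((Real.holderConjugate_iff_eq_conjExponent hq1).mpr rfl).symm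
    have hppos : 0 < p := hpq.pos
    have hsum : 1/p + 1/q = 1 := by
      rw [one_div, one_div]; exact hpq.inv_add_inv_eq_one
    have hp_inv : 1/p = 1 - 1/q := by linarith
    set μ := volume.restrict (Ioc lo hi) with hμ
    haveI : IsFiniteMeasure μ := ⟨by
      rw [hμ, Measure.restrict_apply_univ]; exact measure_Ioc_lt_top⟩
    set f₁ : ℝ → ℝ := fun t => |t - c| ^ (1/p) with hf₁
    set f₂ : ℝ → ℝ := fun t => |t - c| ^ (1/q) * g t with hf₂
    have hcabs : Continuous fun t : ℝ => |t - c| :=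
      (continuous_id.sub continuous_const).abs
    have c₁ : Continuous f₁ := (cont_rpow (by positivity)).comp hcabs
    have c₂ : Continuous f₂ := ((cont_rpow (by positivity)).comp hcabs).mul hgc
    have mem : ∀ (f : ℝ → ℝ), Continuous f → ∀ e : ℝ, MemLp f (ENNReal.ofReal e) μ := by
      intro f hf e
      obtain ⟨C, hC⟩ := (isCompact_Icc (a := lo) (b := hi)).exists_bound_of_continuousOn
        hf.continuousOn
      refine MemLp.of_bound hf.aestronglyMeasurable.restrict C ?_
      refine (ae_restrict_iff' measurableSet_Ioc).2 (ae_of_all _ fun t ht => ?_)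
      exact hC t (Ioc_subset_Icc_self ht)
    have h1n : 0 ≤ᵐ[μ] f₁ := ae_of_all _ fun t => Real.rpow_nonneg (abs_nonneg _) _
    have h2n : 0 ≤ᵐ[μ] f₂ :=
      (ae_restrict_iff' measurableSet_Ioc).2 (ae_of_all _ fun t ht =>
        mul_nonneg (Real.rpow_nonneg (abs_nonneg _) _) (hg0 t (Ioc_subset_Icc_self ht)))
    have key := integral_mul_le_Lp_mul_Lq_of_nonneg (μ := μ) hpq h1n h2n
      (mem f₁ c₁ p) (mem f₂ c₂ q)
    have A : ∫ t, f₁ t * f₂ t ∂μ = ∫ t in Ioc lo hi, |t - c| * g t := by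
      refine integral_congr_ae (ae_of_all _ fun t => ?_)
      show |t - c| ^ (1/p) * (|t - c| ^ (1/q) * g t) = |t - c| * g t
      rw [← mul_assoc, ← Real.rpow_add' (abs_nonneg _) (by rw [hsum]; norm_num), hsum,
        Real.rpow_one]
    have B : ∫ t, f₁ t ^ p ∂μ = ∫ t in Ioc lo hi, |t - c| := by
      refine integral_congr_ae (ae_of_all _ fun t => ?_)
      show (|t - c| ^ (1/p)) ^ p = |t - c|
      rw [← Real.rpow_mul (abs_nonneg _), one_div_mul_cancel hppos.ne', Real.rpow_one]
    have C : ∫ t, f₂ t ^ q ∂μ = ∫ t in Ioc lo hi, |t - c| * g t ^ q := by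
      refine integral_congr_ae ((ae_restrict_iff' measurableSet_Ioc).2
        (ae_of_all _ fun t ht => ?_))
      show (|t - c| ^ (1/q) * g t) ^ q = |t - c| * g t ^ q
      rw [Real.mul_rpow (Real.rpow_nonneg (abs_nonneg _) _) (hg0 t (Ioc_subset_Icc_self ht)),
        ← Real.rpow_mul (abs_nonneg _), one_div_mul_cancel hqpos.ne', Real.rpow_one]
    rw [A, B, C, hp_inv] at key
    rw [intervalIntegral.integral_of_le hlh, intervalIntegral.integral_of_le hlh,
      intervalIntegral.integral_of_le hlh]
    exact key

private lemma piece_bound {a b s q x y c : ℝ} (ha : 0 < a) (hab : a < b) (hs : 0 < s)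
    (hq : 1 ≤ q) (hr1 : s*q ≤ 1) (hx : 0 ≤ x) (hxc : x ≤ c) (hcy : c ≤ y) (hy : y ≤ 1) :
    |∫ t in x..y, (t - c) * (t*b+(1-t)*a)^s|
      ≤ (∫ t in x..y, |t - c|) ^ (1 - 1/q) *
        (∫ t in x..y, |t - c| * (t^(s*q) * b^(s*q) + (1-t)^(s*q) * a^(s*q))) ^ (1/q) := by
  have hxy : x ≤ y := hxc.trans hcy
  have hqpos : (0:ℝ) < q := lt_of_lt_of_le zero_lt_one hq
  have hr0 : 0 < s*q := mul_pos hs hqpos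
  have hb : (0:ℝ) < b := lt_trans ha hab
  have hvc : Continuous (fun t : ℝ => t*b+(1-t)*a) := by continuity
  have hgc : Continuous (fun t : ℝ => (t*b+(1-t)*a)^s) := (cont_rpow hs).comp hvc
  have hvnn : ∀ t ∈ Icc x y, (0:ℝ) ≤ t*b+(1-t)*a := by
    intro t ht
    have ht0 : 0 ≤ t := hx.trans ht.1
    have ht1 : t ≤ 1 := ht.2.trans hy
    have := mul_nonneg ht0 hb.le
    have := mul_nonneg (by linarith : (0:ℝ) ≤ 1 - t) ha.le
    linarith
  have hgnn : ∀ t ∈ Icc x y, (0:ℝ) ≤ (t*b+(1-t)*a)^s :=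
    fun t ht => Real.rpow_nonneg (hvnn t ht) s
  have step1 : |∫ t in x..y, (t - c) * (t*b+(1-t)*a)^s|
      ≤ ∫ t in x..y, |t - c| * (t*b+(1-t)*a)^s := by
    refine le_trans (intervalIntegral.abs_integral_le_integral_abs hxy) (le_of_eq ?_)
    apply intervalIntegral.integral_congr
    intro t ht
    rw [uIcc_of_le hxy] at ht
    show |(t - c) * (t*b+(1-t)*a)^s| = |t - c| * (t*b+(1-t)*a)^s
    rw [abs_mul, abs_of_nonneg (hgnn t ht)]
  have step2 := weighted_holder hq hxy hgc hgnn (c := c)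
  have step3 : ∫ t in x..y, |t - c| * ((t*b+(1-t)*a)^s) ^ q
      ≤ ∫ t in x..y, |t - c| * (t^(s*q) * b^(s*q) + (1-t)^(s*q) * a^(s*q)) := by
    apply intervalIntegral.integral_mono_on hxy
    · apply Continuous.intervalIntegrable
      exact ((continuous_id.sub continuous_const).abs).mul ((cont_rpow hqpos).comp hgc)
    · apply Continuous.intervalIntegrable
      apply ((continuous_id.sub continuous_const).abs).mul
      exact ((cont_rpow hr0).mul continuous_const).add
        (((cont_rpow hr0).comp (continuous_const.sub continuous_id)).mul continuous_const)
    · intro t ht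
      have ht0 : 0 ≤ t := hx.trans ht.1
      have ht1 : t ≤ 1 := ht.2.trans hy
      apply mul_le_mul_of_nonneg_left _ (abs_nonneg _)
      have e1 : ((t*b+(1-t)*a)^s) ^ q = (t*b+(1-t)*a)^(s*q) :=
        (Real.rpow_mul (hvnn t ht) s q).symm
      rw [e1]
      calc (t*b+(1-t)*a)^(s*q)
          ≤ (t*b)^(s*q) + ((1-t)*a)^(s*q) :=
            rpow_add_le (mul_nonneg ht0 hb.le)
              (mul_nonneg (by linarith) ha.le) hr0.le hr1
        _ = t^(s*q) * b^(s*q) + (1-t)^(s*q) * a^(s*q) := by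
            rw [Real.mul_rpow ht0 hb.le, Real.mul_rpow (by linarith) ha.le]
  refine le_trans step1 (le_trans step2 ?_)
  apply mul_le_mul_of_nonneg_left _ (Real.rpow_nonneg ?_ _)
  · apply Real.rpow_le_rpow _ step3 (by positivity)
    apply intervalIntegral.integral_nonneg hxy
    intro t ht
    exact mul_nonneg (abs_nonneg _) (Real.rpow_nonneg (hgnn t ht) q)
  · apply intervalIntegral.integral_nonneg hxy
    intro t _
    exact abs_nonneg _
theorem stmt_19 (a b s q α l γ₂ υ₂ μ₁ μ₂ η₃ η₄ : ℝ)
    (ha : 0 < a) (hab : a < b) (hq : 1 ≤ q) (hs : 0 < s) (hs' : s < 1/q)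
    (hα : α ∈ Set.Icc (0:ℝ) 1) (hl : l ∈ Set.Icc (0:ℝ) 1)
    (hcase₁ : α * l ≤ 1 - α) (hcase₂ : 1 - α ≤ 1 - l * (1 - α))
    (hγ₂ : γ₂ = (α * l) ^ (2:ℕ) - (1 - α) * (α * l - (1 - α)/2))
    (hυ₂ : υ₂ = (1 + (1 - α) ^ (2:ℕ)) / 2 - (l + 1) * (1 - α) * (1 - l * (1 - α)))
    (hμ₁ : μ₁ = (α * l) ^ (s*q+2) * (2 / ((s*q+1) * (s*q+2)))
        - (α * l) * (1 - α) ^ (s*q+1) / (s*q+1) + (1 - α) ^ (s*q+2) / (s*q+2))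
    (hμ₂ : μ₂ = (1 - α * l) ^ (s*q+2) * (2 / ((s*q+1) * (s*q+2)))
        - (1 - α * l) * (1 + α ^ (s*q+1)) / (s*q+1) + (1 + α ^ (s*q+2)) / (s*q+2))
    (hη₃ : η₃ = 2 * (1 - l * (1 - α)) ^ (s*q+2) / ((s*q+1) * (s*q+2))
        - (1 + (1 - α) ^ (s*q+1)) * (1 - l * (1 - α)) / (s*q+1)
        + (1 + (1 - α) ^ (s*q+2)) / (s*q+2))
    (hη₄ : η₄ = (l * (1 - α)) ^ (s*q+2) * (2 / ((s*q+1) * (s*q+2)))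
        - l * (1 - α) * α ^ (s*q+1) / (s*q+1) + α ^ (s*q+2) / (s*q+2)) :
    |l * (α * a ^ (s+1) + (1 - α) * b ^ (s+1)) + (1 - l) * (α * a + (1 - α) * b) ^ (s+1)
        - (b ^ (s+2) - a ^ (s+2)) / ((s+2) * (b - a))|
      ≤ (b - a) * (s+1) *
        (γ₂ ^ (1 - 1/q) * (μ₁ * b ^ (s*q) + μ₂ * a ^ (s*q)) ^ (1/q)
          + υ₂ ^ (1 - 1/q) * (η₃ * b ^ (s*q) + η₄ * a ^ (s*q)) ^ (1/q)) := by
  obtain ⟨hα0, hα1⟩ := hα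
  obtain ⟨hl0, hl1⟩ := hl
  have hqpos : (0:ℝ) < q := lt_of_lt_of_le zero_lt_one hq
  have hr0 : 0 < s*q := mul_pos hs hqpos
  have hr1 : s*q ≤ 1 := by
    have h := mul_lt_mul_of_pos_right hs' hqpos
    rw [one_div, inv_mul_cancel₀ hqpos.ne'] at h
    exact h.le
  have hba : (0:ℝ) < b - a := by linarith
  have hne1 : s*q + 1 ≠ 0 := by positivity
  have hne2 : s*q + 2 ≠ 0 := by positivity
  have hs1 : s + 1 ≠ 0 := by positivity
  have hs2 : s + 2 ≠ 0 := by positivity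
  have hc₁0 : (0:ℝ) ≤ α*l := mul_nonneg hα0 hl0
  have hc₁y : α*l ≤ 1-α := hcase₁
  have h1α0 : (0:ℝ) ≤ 1-α := le_trans hc₁0 hcase₁
  have hαle : (1:ℝ)-α ≤ 1 := by linarith
  have hc₁1 : α*l ≤ 1 := hc₁y.trans hαle
  have h1c₁0 : (0:ℝ) ≤ 1 - α*l := by linarith
  have hc₂x : 1-α ≤ 1 - l*(1-α) := hcase₂
  have h1c₂0 : (0:ℝ) ≤ l*(1-α) := mul_nonneg hl0 h1α0
  have hc₂y : 1 - l*(1-α) ≤ 1 := by linarith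
  have hc₂0 : (0:ℝ) ≤ 1 - l*(1-α) := h1α0.trans hc₂x
  -- the identity
  have hid : l * (α * a ^ (s+1) + (1 - α) * b ^ (s+1))
        + (1 - l) * (α * a + (1 - α) * b) ^ (s+1)
        - (b ^ (s+2) - a ^ (s+2)) / ((s+2) * (b - a))
      = (b - a) * ((s+1) *
        ((∫ t in (0:ℝ)..(1-α), (t - α*l) * (t*b+(1-t)*a)^s)
          + ∫ t in (1-α)..(1:ℝ), (t - (1 - l*(1-α))) * (t*b+(1-t)*a)^s)) := by
    rw [integral_kernel hab hs, integral_kernel hab hs]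
    rw [show (0:ℝ)*b+(1-0)*a = a by ring, show (1:ℝ)*b+(1-1)*a = b by ring,
      show (1-α)*b+(1-(1-α))*a = α*a+(1-α)*b by ring]
    field_simp
    ring
  -- moment computations, piece 1
  have hW₁ : ∫ t in (0:ℝ)..(1-α), |t - α*l| = γ₂ := by
    have h := abs_weight_split (x := 0) (y := 1-α) hc₁0 hc₁y (w := fun _ => (1:ℝ))
      continuous_const
    simp only [mul_one] at h
    rw [h]
    rw [show (fun t : ℝ => t - α*l) = fun t : ℝ => (t - α*l) * 1 by funext t; ring]
    rw [integral_tc, integral_tc, hγ₂]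
    ring
  have hcc₁ : (α*l) ^ (s*q+2) = (α*l) ^ (s*q+1) * (α*l) := by
    rw [show s*q+2 = (s*q+1)+1 by ring,
      Real.rpow_add' hc₁0 (by exact ne_of_gt (by linarith)), Real.rpow_one]
  have hM₁ : ∫ t in (0:ℝ)..(1-α), |t - α*l| * t^(s*q) = μ₁ := by
    rw [abs_weight_split hc₁0 hc₁y (cont_rpow hr0),
      integral_tc_rpow hr0 hc₁0 hc₁y, integral_tc_rpow hr0 le_rfl hc₁0,
      Real.zero_rpow hne2, Real.zero_rpow hne1, hμ₁, hcc₁]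
    field_simp
    ring
  have hcc₂ : (1 - α*l) ^ (s*q+2) = (1 - α*l) ^ (s*q+1) * (1 - α*l) := by
    rw [show s*q+2 = (s*q+1)+1 by ring,
      Real.rpow_add' h1c₁0 (by exact ne_of_gt (by linarith)), Real.rpow_one]
  have hcont1mt : Continuous fun t : ℝ => (1-t)^(s*q) :=
    (cont_rpow hr0).comp ((continuous_const : Continuous fun _ : ℝ => (1:ℝ)).sub continuous_id)
  have hN₁ : ∫ t in (0:ℝ)..(1-α), |t - α*l| * (1-t)^(s*q) = μ₂ := by
    rw [abs_weight_split (w := fun t : ℝ => (1-t)^(s*q)) hc₁0 hc₁y hcont1mt,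
      integral_tc_rpow' hr0 hc₁y hαle, integral_tc_rpow' hr0 hc₁0 hc₁1,
      show (1:ℝ)-(1-α) = α by ring, show (1:ℝ)-0 = 1 by ring,
      Real.one_rpow, Real.one_rpow, hμ₂, hcc₂]
    field_simp
    ring
  -- moment computations, piece 2
  have hW₂ : ∫ t in (1-α)..(1:ℝ), |t - (1 - l*(1-α))| = υ₂ := by
    have h := abs_weight_split (x := 1-α) (y := 1) hc₂x hc₂y (w := fun _ => (1:ℝ))
      continuous_const
    simp only [mul_one] at h
    rw [h]
    rw [show (fun t : ℝ => t - (1 - l*(1-α))) = fun t : ℝ => (t - (1 - l*(1-α))) * 1 by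
      funext t; ring]
    rw [integral_tc, integral_tc, hυ₂]
    ring
  have hcc₃ : (1 - l*(1-α)) ^ (s*q+2) = (1 - l*(1-α)) ^ (s*q+1) * (1 - l*(1-α)) := by
    rw [show s*q+2 = (s*q+1)+1 by ring,
      Real.rpow_add' hc₂0 (by exact ne_of_gt (by linarith)), Real.rpow_one]
  have hM₂ : ∫ t in (1-α)..(1:ℝ), |t - (1 - l*(1-α))| * t^(s*q) = η₃ := by
    rw [abs_weight_split hc₂x hc₂y (cont_rpow hr0),
      integral_tc_rpow hr0 hc₂0 hc₂y, integral_tc_rpow hr0 h1α0 hc₂x,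
      Real.one_rpow, Real.one_rpow, hη₃, hcc₃]
    field_simp
    ring
  have hcc₄ : (l*(1-α)) ^ (s*q+2) = (l*(1-α)) ^ (s*q+1) * (l*(1-α)) := by
    rw [show s*q+2 = (s*q+1)+1 by ring,
      Real.rpow_add' h1c₂0 (by exact ne_of_gt (by linarith)), Real.rpow_one]
  have hN₂ : ∫ t in (1-α)..(1:ℝ), |t - (1 - l*(1-α))| * (1-t)^(s*q) = η₄ := by
    rw [abs_weight_split (w := fun t : ℝ => (1-t)^(s*q)) hc₂x hc₂y hcont1mt,
      integral_tc_rpow' hr0 hc₂y le_rfl, integral_tc_rpow' hr0 hc₂x hc₂y,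
      show (1:ℝ)-1 = 0 by ring, show (1:ℝ)-(1-α) = α by ring,
      show (1:ℝ)-(1 - l*(1-α)) = l*(1-α) by ring,
      Real.zero_rpow hne2, Real.zero_rpow hne1, hη₄, hcc₄]
    field_simp
    ring
  -- combine the moment integrals
  have hI₁ : ∫ t in (0:ℝ)..(1-α), |t - α*l| * (t^(s*q) * b^(s*q) + (1-t)^(s*q) * a^(s*q))
      = μ₁ * b^(s*q) + μ₂ * a^(s*q) := by
    have e : (fun t : ℝ => |t - α*l| * (t^(s*q) * b^(s*q) + (1-t)^(s*q) * a^(s*q)))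
        = fun t : ℝ => b^(s*q) * (|t - α*l| * t^(s*q))
            + a^(s*q) * (|t - α*l| * (1-t)^(s*q)) := by
      funext t; ring
    rw [e, intervalIntegral.integral_add, intervalIntegral.integral_const_mul,
      intervalIntegral.integral_const_mul, hM₁, hN₁]
    · ring
    · exact (continuous_const.mul
        (((continuous_id.sub continuous_const).abs).mul (cont_rpow hr0))).intervalIntegrable _ _
    · exact (continuous_const.mul
        (((continuous_id.sub continuous_const).abs).mul
          ((cont_rpow hr0).comp (continuous_const.sub continuous_id)))).intervalIntegrable _ _
  have hI₂ : ∫ t in (1-α)..(1:ℝ),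
        |t - (1 - l*(1-α))| * (t^(s*q) * b^(s*q) + (1-t)^(s*q) * a^(s*q))
      = η₃ * b^(s*q) + η₄ * a^(s*q) := by
    have e : (fun t : ℝ => |t - (1 - l*(1-α))| * (t^(s*q) * b^(s*q) + (1-t)^(s*q) * a^(s*q)))
        = fun t : ℝ => b^(s*q) * (|t - (1 - l*(1-α))| * t^(s*q))
            + a^(s*q) * (|t - (1 - l*(1-α))| * (1-t)^(s*q)) := by
      funext t; ring
    rw [e, intervalIntegral.integral_add, intervalIntegral.integral_const_mul,
      intervalIntegral.integral_const_mul, hM₂, hN₂]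
    · ring
    · exact (continuous_const.mul
        (((continuous_id.sub continuous_const).abs).mul (cont_rpow hr0))).intervalIntegrable _ _
    · exact (continuous_const.mul
        (((continuous_id.sub continuous_const).abs).mul
          ((cont_rpow hr0).comp (continuous_const.sub continuous_id)))).intervalIntegrable _ _
  -- piece bounds
  have pb₁ := piece_bound ha hab hs hq hr1 le_rfl hc₁0 hc₁y hαle
  rw [hW₁, hI₁] at pb₁
  have pb₂ := piece_bound ha hab hs hq hr1 h1α0 hc₂x hc₂y le_rfl
  rw [hW₂, hI₂] at pb₂
  -- final assembly
  rw [hid, abs_mul, abs_mul, abs_of_nonneg hba.le,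
    abs_of_nonneg (by linarith : (0:ℝ) ≤ s+1)]
  have step : |(∫ t in (0:ℝ)..(1-α), (t - α*l) * (t*b+(1-t)*a)^s)
        + ∫ t in (1-α)..(1:ℝ), (t - (1 - l*(1-α))) * (t*b+(1-t)*a)^s|
      ≤ γ₂ ^ (1 - 1/q) * (μ₁ * b ^ (s*q) + μ₂ * a ^ (s*q)) ^ (1/q)
        + υ₂ ^ (1 - 1/q) * (η₃ * b ^ (s*q) + η₄ * a ^ (s*q)) ^ (1/q) :=
    le_trans (abs_add_le _ _) (add_le_add pb₁ pb₂)
  calc (b - a) * ((s+1) * |(∫ t in (0:ℝ)..(1-α), (t - α*l) * (t*b+(1-t)*a)^s)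
        + ∫ t in (1-α)..(1:ℝ), (t - (1 - l*(1-α))) * (t*b+(1-t)*a)^s|)
      ≤ (b - a) * ((s+1) *
        (γ₂ ^ (1 - 1/q) * (μ₁ * b ^ (s*q) + μ₂ * a ^ (s*q)) ^ (1/q)
          + υ₂ ^ (1 - 1/q) * (η₃ * b ^ (s*q) + η₄ * a ^ (s*q)) ^ (1/q))) :=
        mul_le_mul_of_nonneg_left
          (mul_le_mul_of_nonneg_left step (by linarith)) hba.le
    _ = (b - a) * (s+1) *
        (γ₂ ^ (1 - 1/q) * (μ₁ * b ^ (s*q) + μ₂ * a ^ (s*q)) ^ (1/q)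
          + υ₂ ^ (1 - 1/q) * (η₃ * b ^ (s*q) + η₄ * a ^ (s*q)) ^ (1/q)) := by ring
end
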